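/- arXiv:2111.01640 — 9 statements merged into one kernel-verified Lean document; each statement's English description precedes it below -/
import Mathlib

section
/- In the univariate changepoint model with changepoint z and post-change mean θ > 0, let 0 < b ≤ θ and α ∈ (0,1). Let N be an almost surely finite stopping time with respect to the natural filtration of (X_i)_{i≥1}, satisfying P(N < z) ≤ α/2. Then the confidence interval C₀ := [ N − t_{N,b} − 8·log(2/α)/b² , N ] covers the changepoint with probability at least 1 − α, i.e. P( N − t_{N,b} − 8·log(2/α)/b² ≤ z ≤ N ) ≥ 1 − α. -/
open MeasureTheory ProbabilityTheory

/-- The residual tail length `t_{n,b}`: the smallest `h ∈ {0,…,n}` maximising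
`∑_{i=n-h+1}^n (X_i - b/2)`.  Here the observations `X₁, X₂, …` are represented by
`X : ℕ → ℝ` with `X i` standing for `X_{i+1}`, so that the sum of the last `h` of the
first `n` observations is the sum over `i ∈ [n-h, n)`. -/
noncomputable def tailLen (X : ℕ → ℝ) (b : ℝ) (n : ℕ) : ℕ :=
  sInf {h : ℕ | h ≤ n ∧ ∀ h' ≤ n,
    (∑ i ∈ Finset.Ico (n - h') n, (X i - b / 2)) ≤ ∑ i ∈ Finset.Ico (n - h) n, (X i - b / 2)}


section CPaux
open Real
open scoped ENNReal NNReal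
lemma gaussianPDFReal_mul_exp (m c x : ℝ) :
    gaussianPDFReal m 1 x * Real.exp (c * x)
      = Real.exp (c * m + c ^ 2 / 2) * gaussianPDFReal (m + c) 1 x := by
  simp only [gaussianPDFReal, NNReal.coe_one, mul_one]
  rw [mul_assoc, ← Real.exp_add, mul_comm (Real.exp _), mul_assoc, ← Real.exp_add]
  congr 1
  ring_nf

lemma integrable_pdf_mul_exp (m c : ℝ) :
    Integrable (fun x => gaussianPDFReal m 1 x * Real.exp (c * x)) := by
  have := (integrable_gaussianPDFReal (m + c) 1).const_mul (Real.exp (c * m + c ^ 2 / 2))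
  refine this.congr ?_
  filter_upwards with x
  rw [gaussianPDFReal_mul_exp]

lemma gaussianReal_eq_withDensity (m : ℝ) :
    gaussianReal m 1 = volume.withDensity
      (fun x => ((gaussianPDFReal m 1 x).toNNReal : ℝ≥0∞)) := by
  rw [gaussianReal_of_var_ne_zero m one_ne_zero]
  rfl

lemma gaussian_exp_integrable (m c : ℝ) :
    Integrable (fun x => Real.exp (c * x)) (gaussianReal m 1) := by
  rw [gaussianReal_eq_withDensity,
    integrable_withDensity_iff_integrable_smul (measurable_gaussianPDFReal m 1).real_toNNReal]
  refine (integrable_pdf_mul_exp m c).congr ?_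
  filter_upwards with x
  simp [NNReal.smul_def, Real.coe_toNNReal _ (gaussianPDFReal_nonneg m 1 x)]

lemma gaussian_exp_integral (m c : ℝ) :
    ∫ x, Real.exp (c * x) ∂(gaussianReal m 1) = Real.exp (c * m + c ^ 2 / 2) := by
  rw [gaussianReal_eq_withDensity,
    integral_withDensity_eq_integral_smul (measurable_gaussianPDFReal m 1).real_toNNReal]
  have : ∀ x, (gaussianPDFReal m 1 x).toNNReal • Real.exp (c * x)
      = Real.exp (c * m + c ^ 2 / 2) * gaussianPDFReal (m + c) 1 x := by
    intro x
    rw [NNReal.smul_def, Real.coe_toNNReal _ (gaussianPDFReal_nonneg m 1 x),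
      smul_eq_mul, gaussianPDFReal_mul_exp]
  simp_rw [this]
  rw [integral_const_mul, integral_gaussianPDFReal_eq_one (m + c) one_ne_zero, mul_one]
section Aux
variable {Ω : Type*} [MeasureSpace Ω]

/-- the walk after the changepoint -/
noncomputable def cpS (X : ℕ → Ω → ℝ) (z : ℕ) (b : ℝ) (k : ℕ) (ω : Ω) : ℝ :=
  ∑ i ∈ Finset.Ico z (z + k), (X i ω - b / 2)

noncomputable def cpf (X : ℕ → Ω → ℝ) (z : ℕ) (b : ℝ) (j : ℕ) (ω : Ω) : ℝ :=
  Real.exp (b ^ 2 / 8 - b / 2 * (X (z + j) ω - b / 2))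

noncomputable def cpM (X : ℕ → Ω → ℝ) (z : ℕ) (b : ℝ) (n : ℕ) (ω : Ω) : ℝ :=
  ∏ j ∈ Finset.range n, cpf X z b j ω

def cpG (X : ℕ → Ω → ℝ) (z : ℕ) (b : ℝ) (m₀ n : ℕ) : Set Ω :=
  {ω | ∀ k, m₀ ≤ k → k ≤ n → 0 < cpS X z b k ω}

def cpD (X : ℕ → Ω → ℝ) (z : ℕ) (b : ℝ) (m₀ k : ℕ) : Set Ω :=
  {ω | m₀ ≤ k ∧ cpS X z b k ω ≤ 0 ∧ ∀ j, m₀ ≤ j → j < k → 0 < cpS X z b j ω}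

variable (X : ℕ → Ω → ℝ) (z : ℕ) (b : ℝ) (m₀ : ℕ)

lemma cpS_meas (hmeas : ∀ i, Measurable (X i)) (k : ℕ) : Measurable (cpS X z b k) :=
  Finset.measurable_sum _ fun i _ => (hmeas i).sub measurable_const

lemma cpf_meas (hmeas : ∀ i, Measurable (X i)) (j : ℕ) : Measurable (cpf X z b j) :=
  Real.measurable_exp.comp
    (measurable_const.sub (((hmeas (z + j)).sub measurable_const).const_mul _))

lemma cpM_meas (hmeas : ∀ i, Measurable (X i)) (n : ℕ) : Measurable (cpM X z b n) :=
  Finset.measurable_prod _ fun j _ => cpf_meas X z b hmeas j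

lemma cpG_meas (hmeas : ∀ i, Measurable (X i)) (n : ℕ) :
    MeasurableSet (cpG X z b m₀ n) := by
  have : cpG X z b m₀ n = ⋂ k, ⋂ (_ : m₀ ≤ k), ⋂ (_ : k ≤ n), {ω | 0 < cpS X z b k ω} := by
    ext ω; simp [cpG, Set.mem_iInter]
  rw [this]
  exact MeasurableSet.iInter fun k => MeasurableSet.iInter fun _ =>
    MeasurableSet.iInter fun _ => measurableSet_lt measurable_const (cpS_meas X z b hmeas k)

lemma cpD_meas (hmeas : ∀ i, Measurable (X i)) (k : ℕ) :
    MeasurableSet (cpD X z b m₀ k) := by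
  have : cpD X z b m₀ k = (if m₀ ≤ k then (Set.univ : Set Ω) else ∅) ∩ {ω | cpS X z b k ω ≤ 0} ∩
      ⋂ j, ⋂ (_ : m₀ ≤ j), ⋂ (_ : j < k), {ω | 0 < cpS X z b j ω} := by
    ext ω
    by_cases h : m₀ ≤ k <;> simp [cpD, h, Set.mem_iInter, and_assoc]
  rw [this]
  refine (MeasurableSet.inter (MeasurableSet.inter ?_ ?_) ?_)
  · split <;> simp
  · exact measurableSet_le (cpS_meas X z b hmeas k) measurable_const
  · exact MeasurableSet.iInter fun j => MeasurableSet.iInter fun _ =>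
      MeasurableSet.iInter fun _ => measurableSet_lt measurable_const (cpS_meas X z b hmeas j)

lemma cpf_nonneg (j : ℕ) (ω : Ω) : 0 ≤ cpf X z b j ω := (Real.exp_pos _).le

lemma cpM_nonneg (n : ℕ) (ω : Ω) : 0 ≤ cpM X z b n ω :=
  Finset.prod_nonneg fun j _ => cpf_nonneg X z b j ω

end Aux

section Aux2
variable {Ω : Type*} [MeasureSpace Ω] [IsProbabilityMeasure (ℙ : Measure Ω)]
variable (X : ℕ → Ω → ℝ) (z : ℕ) {θ b : ℝ} (m₀ : ℕ)

lemma cpf_rw (j : ℕ) : cpf X z b j = fun ω =>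
    Real.exp (3 * b ^ 2 / 8) * Real.exp (-(b / 2) * X (z + j) ω) := by
  funext ω
  rw [cpf, ← Real.exp_add]
  congr 1; ring

lemma cp_exp_int (hmeas : ∀ i, Measurable (X i))
    (hpost : ∀ i, z ≤ i → Measure.map (X i) ℙ = gaussianReal θ 1) (j : ℕ) :
    Integrable (fun ω => Real.exp (-(b / 2) * X (z + j) ω)) ℙ := by
  have h1 := gaussian_exp_integrable θ (-(b / 2))
  rw [← hpost (z + j) (Nat.le_add_right z j)] at h1
  exact (integrable_map_measure
    (((Real.measurable_exp.comp (measurable_const_mul _)) : Measurable fun x : ℝ => Real.exp (-(b / 2) * x)).aestronglyMeasurable) (hmeas (z + j)).aemeasurable).1 h1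

lemma cpf_int (hmeas : ∀ i, Measurable (X i))
    (hpost : ∀ i, z ≤ i → Measure.map (X i) ℙ = gaussianReal θ 1) (j : ℕ) :
    Integrable (cpf X z b j) ℙ := by
  rw [cpf_rw]
  exact (cp_exp_int X z hmeas hpost j).const_mul _

lemma cpf_mean (hb : 0 < b) (hbθ : b ≤ θ) (hmeas : ∀ i, Measurable (X i))
    (hpost : ∀ i, z ≤ i → Measure.map (X i) ℙ = gaussianReal θ 1) (j : ℕ) :
    ∫ ω, cpf X z b j ω ∂ℙ ≤ 1 := by
  rw [cpf_rw, integral_const_mul]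
  have h2 : ∫ ω, Real.exp (-(b / 2) * X (z + j) ω) ∂ℙ
      = Real.exp (-(b / 2) * θ + (-(b / 2)) ^ 2 / 2) := by
    rw [← gaussian_exp_integral θ (-(b / 2)), ← hpost (z + j) (Nat.le_add_right z j)]
    exact (integral_map (hmeas (z + j)).aemeasurable (((Real.measurable_exp.comp (measurable_const_mul _)) : Measurable fun x : ℝ => Real.exp (-(b / 2) * x)).aestronglyMeasurable)).symm
  rw [h2, ← Real.exp_add,
    show 3 * b ^ 2 / 8 + (-(b / 2) * θ + (-(b / 2)) ^ 2 / 2) = b ^ 2 / 2 - b * θ / 2 by ring]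
  apply Real.exp_le_one_iff.2
  nlinarith

end Aux2

section Aux3
variable {Ω : Type*} [MeasureSpace Ω] [IsProbabilityMeasure (ℙ : Measure Ω)]

lemma indep_helper (X : ℕ → Ω → ℝ) (hmeas : ∀ i, Measurable (X i))
    (hindep : iIndepFun X ℙ)
    (m : ℕ) (g : (ℕ → ℝ) → ℝ) (hg : Measurable g) (ψ : ℝ → ℝ) (hψ : Measurable ψ) :
    IndepFun (fun ω => g (fun i => if i ∈ Finset.range m then X i ω else 0))
      (fun ω => ψ (X m ω)) ℙ := by
  have hdisj : Disjoint (Finset.range m) ({m} : Finset ℕ) := by simp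
  have hbase := hindep.indepFun_finset (Finset.range m) {m} hdisj hmeas
  have he : Measurable (fun (v : ((Finset.range m : Finset ℕ) : Type) → ℝ) =>
      (fun i => if h : i ∈ Finset.range m then v ⟨i, h⟩ else 0 : ℕ → ℝ)) := by
    apply measurable_pi_lambda
    intro i
    by_cases h : i ∈ Finset.range m
    · simpa [h] using measurable_pi_apply (⟨i, h⟩ : (Finset.range m : Finset ℕ))
    · simpa [h] using measurable_const
  have hψ' : Measurable (fun (v : (({m} : Finset ℕ) : Type) → ℝ) =>
      ψ (v ⟨m, Finset.mem_singleton_self m⟩)) :=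
    hψ.comp (measurable_pi_apply _)
  exact hbase.comp (hg.comp he) hψ'

variable (X : ℕ → Ω → ℝ) {θ b : ℝ} (z m₀ : ℕ)

/-- product function on the path space -/
noncomputable def cpgM (z : ℕ) (b : ℝ) (n : ℕ) (u : ℕ → ℝ) : ℝ :=
  ∏ j ∈ Finset.range n, Real.exp (b ^ 2 / 8 - b / 2 * (u (z + j) - b / 2))

lemma cpgM_meas (n : ℕ) : Measurable (cpgM z b n) :=
  Finset.measurable_prod _ fun j _ => Real.measurable_exp.comp
    (measurable_const.sub (((measurable_pi_apply (z + j)).sub measurable_const).const_mul _))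

lemma cpgM_eq (n : ℕ) (ω : Ω) :
    cpgM z b n (fun i => if i ∈ Finset.range (z + n) then X i ω else 0) = cpM X z b n ω := by
  refine Finset.prod_congr rfl fun j hj => ?_
  have hic : z + j ∈ Finset.range (z + n) :=
    Finset.mem_range.2 (by have := Finset.mem_range.1 hj; omega)
  simp only [if_pos hic]
  rfl

lemma cpM_indep_f (hmeas : ∀ i, Measurable (X i))
    (hindep : iIndepFun X ℙ) (n : ℕ) :
    IndepFun (cpM X z b n) (cpf X z b n) ℙ := by
  have h := indep_helper X hmeas hindep (z + n) (cpgM z b n) (cpgM_meas z n)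
    (fun x => Real.exp (b ^ 2 / 8 - b / 2 * (x - b / 2)))
    (Real.measurable_exp.comp
      (measurable_const.sub ((measurable_id.sub measurable_const).const_mul _)))
  have h1 : (fun ω => cpgM z b n (fun i => if i ∈ Finset.range (z + n) then X i ω else 0))
      = cpM X z b n := by
    funext ω; exact cpgM_eq X z n ω
  rw [h1] at h
  exact h

lemma cpGM_indep_f (hmeas : ∀ i, Measurable (X i))
    (hindep : iIndepFun X ℙ) (n : ℕ) :
    IndepFun ((cpG X z b m₀ n).indicator (cpM X z b n)) (cpf X z b n) ℙ := by
  set A : Set (ℕ → ℝ) := {u | ∀ k, m₀ ≤ k → k ≤ n →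
      0 < ∑ i ∈ Finset.Ico z (z + k), (u i - b / 2)} with hA
  have hAmeas : MeasurableSet A := by
    have : A = ⋂ k, ⋂ (_ : m₀ ≤ k), ⋂ (_ : k ≤ n),
        {u : ℕ → ℝ | 0 < ∑ i ∈ Finset.Ico z (z + k), (u i - b / 2)} := by
      ext u; simp [hA, Set.mem_iInter]
    rw [this]
    exact MeasurableSet.iInter fun k => MeasurableSet.iInter fun _ =>
      MeasurableSet.iInter fun _ => measurableSet_lt measurable_const
        (Finset.measurable_sum _ fun i _ => (measurable_pi_apply i).sub measurable_const)
  have h := indep_helper X hmeas hindep (z + n) (A.indicator (cpgM z b n))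
    ((cpgM_meas z n).indicator hAmeas)
    (fun x => Real.exp (b ^ 2 / 8 - b / 2 * (x - b / 2)))
    (Real.measurable_exp.comp
      (measurable_const.sub ((measurable_id.sub measurable_const).const_mul _)))
  have h1 : (fun ω => A.indicator (cpgM z b n)
        (fun i => if i ∈ Finset.range (z + n) then X i ω else 0))
      = (cpG X z b m₀ n).indicator (cpM X z b n) := by
    funext ω
    have hsum : ∀ k, k ≤ n →
        (∑ i ∈ Finset.Ico z (z + k),
          ((fun i => if i ∈ Finset.range (z + n) then X i ω else 0) i - b / 2))
        = cpS X z b k ω := by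
      intro k hkn
      refine Finset.sum_congr rfl fun i hi => ?_
      have hic : i ∈ Finset.range (z + n) :=
        Finset.mem_range.2 (by have := Finset.mem_Ico.1 hi; omega)
      simp only [if_pos hic]
    have hmem : (fun i => if i ∈ Finset.range (z + n) then X i ω else 0) ∈ A
        ↔ ω ∈ cpG X z b m₀ n := by
      constructor <;> intro hu k hk hkn
      · have := hu k hk hkn
        rwa [hsum k hkn] at this
      · have := hu k hk hkn
        rw [hsum k hkn]
        exact this
    by_cases hω : ω ∈ cpG X z b m₀ n
    · rw [Set.indicator_of_mem (hmem.2 hω), Set.indicator_of_mem hω, cpgM_eq]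
    · rw [Set.indicator_of_notMem (fun hc => hω (hmem.1 hc)), Set.indicator_of_notMem hω]
  rw [h1] at h
  exact h

lemma cpM_succ (n : ℕ) : cpM X z b (n + 1) = cpM X z b n * cpf X z b n := by
  funext ω
  exact Finset.prod_range_succ _ n

lemma cpM_int (hmeas : ∀ i, Measurable (X i))
    (hindep : iIndepFun X ℙ)
    (hpost : ∀ i, z ≤ i → Measure.map (X i) ℙ = gaussianReal θ 1) :
    ∀ n, Integrable (cpM X z b n) ℙ := by
  intro n
  induction n with
  | zero => exact (integrable_const (1 : ℝ)).congr (Filter.Eventually.of_forall fun ω => by simp [cpM])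
  | succ n ih =>
    rw [cpM_succ]
    exact (cpM_indep_f X z hmeas hindep n).integrable_mul ih (cpf_int X z hmeas hpost n)

end Aux3

section Aux4
variable {Ω : Type*} [MeasureSpace Ω] [IsProbabilityMeasure (ℙ : Measure Ω)]
variable (X : ℕ → Ω → ℝ) {θ b : ℝ} (z m₀ : ℕ)

lemma cpG_split (n : ℕ) (hm₀ : 1 ≤ m₀) :
    cpG X z b m₀ (n + 1) ∪ cpD X z b m₀ (n + 1) = cpG X z b m₀ n := by
  ext ω
  constructor
  · rintro (h | h)
    · exact fun k hk hkn => h k hk (hkn.trans n.le_succ)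
    · exact fun k hk hkn => h.2.2 k hk (by omega)
  · intro h
    by_cases hcase : m₀ ≤ n + 1
    · by_cases hpos : 0 < cpS X z b (n + 1) ω
      · left
        intro k hk hkn
        rcases Nat.lt_succ_iff_lt_or_eq.1 (Nat.lt_succ_of_le hkn) with h' | h'
        · exact h k hk (by omega)
        · rw [h']; exact hpos
      · right
        exact ⟨hcase, le_of_not_gt hpos, fun j hj hjk => h j hj (by omega)⟩
    · left
      intro k hk hkn
      exact h k hk (by omega)

lemma cpGD_disj (n : ℕ) : Disjoint (cpG X z b m₀ (n + 1)) (cpD X z b m₀ (n + 1)) := by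
  rw [Set.disjoint_left]
  intro ω hG hD
  exact absurd (hG (n + 1) hD.1 le_rfl) (not_lt.2 hD.2.1)

lemma cp_claim (hb : 0 < b) (hbθ : b ≤ θ) (hm₀ : 1 ≤ m₀)
    (hmeas : ∀ i, Measurable (X i))
    (hindep : iIndepFun X ℙ)
    (hpost : ∀ i, z ≤ i → Measure.map (X i) ℙ = gaussianReal θ 1) :
    ∀ n, (∑ k ∈ Finset.range (n + 1),
        ∫ ω, (cpD X z b m₀ k).indicator (cpM X z b k) ω ∂ℙ)
      + ∫ ω, (cpG X z b m₀ n).indicator (cpM X z b n) ω ∂ℙ ≤ 1 := by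
  have hMint := cpM_int X z (b := b) hmeas hindep hpost
  have hGint : ∀ n, Integrable ((cpG X z b m₀ n).indicator (cpM X z b n)) ℙ :=
    fun n => (hMint n).indicator (cpG_meas X z b m₀ hmeas n)
  have hDint : ∀ k, Integrable ((cpD X z b m₀ k).indicator (cpM X z b k)) ℙ :=
    fun k => (hMint k).indicator (cpD_meas X z b m₀ hmeas k)
  intro n
  induction n with
  | zero =>
    have hD0 : cpD X z b m₀ 0 = ∅ := by
      ext ω; simp only [cpD, Set.mem_setOf_eq, Set.mem_empty_iff_false, iff_false]
      rintro ⟨h, -⟩; omega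
    have hG0 : cpG X z b m₀ 0 = Set.univ := by
      ext ω; simp only [cpG, Set.mem_setOf_eq, Set.mem_univ, iff_true]
      intro k hk hk0; omega
    have hM0 : cpM X z b 0 = fun _ => (1 : ℝ) := by funext ω; simp [cpM]
    simp only [Finset.sum_range_one, hD0, hG0, hM0, Set.indicator_univ,
      Set.indicator_empty, integral_zero, zero_add]
    simp
  | succ n ih =>
    have hsplit : (cpG X z b m₀ n).indicator (cpM X z b (n + 1))
        = (cpG X z b m₀ (n + 1)).indicator (cpM X z b (n + 1))
          + (cpD X z b m₀ (n + 1)).indicator (cpM X z b (n + 1)) := by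
      rw [← cpG_split X z m₀ n hm₀, Set.indicator_union_of_disjoint (cpGD_disj X z m₀ n)]
      rfl
    have hmul : (cpG X z b m₀ n).indicator (cpM X z b (n + 1))
        = (cpG X z b m₀ n).indicator (cpM X z b n) * cpf X z b n := by
      funext ω
      by_cases h : ω ∈ cpG X z b m₀ n
      · rw [Pi.mul_apply, Set.indicator_of_mem h, Set.indicator_of_mem h, cpM_succ,
          Pi.mul_apply]
      · rw [Pi.mul_apply, Set.indicator_of_notMem h, Set.indicator_of_notMem h, zero_mul]
    have hadd : ∫ ω, (cpG X z b m₀ (n + 1)).indicator (cpM X z b (n + 1)) ω ∂ℙ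
        + ∫ ω, (cpD X z b m₀ (n + 1)).indicator (cpM X z b (n + 1)) ω ∂ℙ
        = (∫ ω, (cpG X z b m₀ n).indicator (cpM X z b n) ω ∂ℙ)
          * ∫ ω, cpf X z b n ω ∂ℙ := by
      rw [← integral_add (hGint (n + 1)) (hDint (n + 1))]
      have : (fun ω => (cpG X z b m₀ (n + 1)).indicator (cpM X z b (n + 1)) ω
            + (cpD X z b m₀ (n + 1)).indicator (cpM X z b (n + 1)) ω)
          = (cpG X z b m₀ n).indicator (cpM X z b n) * cpf X z b n := by
        funext ω
        rw [← Pi.add_apply, ← hsplit, hmul]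
      rw [this]
      exact (cpGM_indep_f X z m₀ hmeas hindep n).integral_mul_eq_mul_integral
        ((cpM_meas X z b hmeas n).indicator (cpG_meas X z b m₀ hmeas n)).aestronglyMeasurable
        (cpf_meas X z b hmeas n).aestronglyMeasurable
    have hGnn : 0 ≤ ∫ ω, (cpG X z b m₀ n).indicator (cpM X z b n) ω ∂ℙ :=
      integral_nonneg fun ω => Set.indicator_nonneg (fun a _ => cpM_nonneg X z b n a) ω
    have hle : ∫ ω, (cpG X z b m₀ (n + 1)).indicator (cpM X z b (n + 1)) ω ∂ℙ
        + ∫ ω, (cpD X z b m₀ (n + 1)).indicator (cpM X z b (n + 1)) ω ∂ℙ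
        ≤ ∫ ω, (cpG X z b m₀ n).indicator (cpM X z b n) ω ∂ℙ := by
      rw [hadd]
      exact mul_le_of_le_one_right hGnn (cpf_mean X z hb hbθ hmeas hpost n)
    rw [Finset.sum_range_succ]
    linarith

end Aux4

section Aux5
variable {Ω : Type*} [MeasureSpace Ω] [IsProbabilityMeasure (ℙ : Measure Ω)]
variable (X : ℕ → Ω → ℝ) {θ b : ℝ} (z m₀ : ℕ)

lemma cpM_eq_exp (k : ℕ) (ω : Ω) :
    cpM X z b k ω = Real.exp ((k : ℝ) * (b ^ 2 / 8) - b / 2 * cpS X z b k ω) := by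
  rw [cpM]
  simp only [cpf]
  rw [← Real.exp_sum]
  congr 1
  rw [Finset.sum_sub_distrib, Finset.sum_const, Finset.card_range, ← Finset.mul_sum,
    cpS, Finset.sum_Ico_eq_sum_range]
  simp only [add_tsub_cancel_left]
  push_cast
  ring

lemma key_bound (hb : 0 < b) (hbθ : b ≤ θ) (hm₀ : 1 ≤ m₀)
    (hmeas : ∀ i, Measurable (X i))
    (hindep : iIndepFun X ℙ)
    (hpost : ∀ i, z ≤ i → Measure.map (X i) ℙ = gaussianReal θ 1) :
    ℙ {ω | ∃ k, m₀ ≤ k ∧ cpS X z b k ω ≤ 0}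
      ≤ ENNReal.ofReal (Real.exp (-(m₀ : ℝ) * b ^ 2 / 8)) := by
  classical
  set ε : ℝ := Real.exp (-(m₀ : ℝ) * b ^ 2 / 8) with hε
  have hεnn : 0 ≤ ε := (Real.exp_pos _).le
  have hMint := cpM_int X z (b := b) hmeas hindep hpost
  -- bound on each disjointified piece
  have hDbound : ∀ k, (ℙ (cpD X z b m₀ k)).toReal
      ≤ ε * ∫ ω, (cpD X z b m₀ k).indicator (cpM X z b k) ω ∂ℙ := by
    intro k
    rw [← measureReal_def, ← integral_indicator_one (cpD_meas X z b m₀ hmeas k)]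
    have hpt : ∀ ω, (cpD X z b m₀ k).indicator (fun _ => (1 : ℝ)) ω
        ≤ ε * (cpD X z b m₀ k).indicator (cpM X z b k) ω := by
      intro ω
      by_cases hω : ω ∈ cpD X z b m₀ k
      · rw [Set.indicator_of_mem hω, Set.indicator_of_mem hω, cpM_eq_exp, hε,
          ← Real.exp_add]
        apply Real.one_le_exp
        have h1 : (m₀ : ℝ) ≤ (k : ℝ) := Nat.cast_le.2 hω.1
        have h2 : cpS X z b k ω ≤ 0 := hω.2.1
        nlinarith [sq_nonneg b]
      · rw [Set.indicator_of_notMem hω, Set.indicator_of_notMem hω, mul_zero]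
    have hint1 : Integrable ((cpD X z b m₀ k).indicator (fun _ => (1 : ℝ))) ℙ :=
      (integrable_const 1).indicator (cpD_meas X z b m₀ hmeas k)
    have hint2 : Integrable
        (fun ω => ε * (cpD X z b m₀ k).indicator (cpM X z b k) ω) ℙ :=
      ((hMint k).indicator (cpD_meas X z b m₀ hmeas k)).const_mul ε
    calc ∫ ω, (cpD X z b m₀ k).indicator (fun _ => (1 : ℝ)) ω ∂ℙ
        ≤ ∫ ω, ε * (cpD X z b m₀ k).indicator (cpM X z b k) ω ∂ℙ :=
          integral_mono hint1 hint2 hpt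
      _ = ε * ∫ ω, (cpD X z b m₀ k).indicator (cpM X z b k) ω ∂ℙ := integral_const_mul _ _
  have hSumInt : ∀ n, ∑ k ∈ Finset.range n,
      ∫ ω, (cpD X z b m₀ k).indicator (cpM X z b k) ω ∂ℙ ≤ 1 := by
    intro n
    have h1 := cp_claim X z m₀ hb hbθ hm₀ hmeas hindep hpost n
    have h2 : 0 ≤ ∫ ω, (cpG X z b m₀ n).indicator (cpM X z b n) ω ∂ℙ :=
      integral_nonneg fun ω => Set.indicator_nonneg (fun a _ => cpM_nonneg X z b n a) ω
    have h3 : ∑ k ∈ Finset.range n, ∫ ω, (cpD X z b m₀ k).indicator (cpM X z b k) ω ∂ℙ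
        ≤ ∑ k ∈ Finset.range (n + 1),
            ∫ ω, (cpD X z b m₀ k).indicator (cpM X z b k) ω ∂ℙ := by
      apply Finset.sum_le_sum_of_subset_of_nonneg
        (Finset.range_subset_range.2 n.le_succ)
      intro k _ _
      exact integral_nonneg fun ω => Set.indicator_nonneg (fun a _ => cpM_nonneg X z b k a) ω
    linarith
  have hPsum : ∀ n, ∑ k ∈ Finset.range n, (ℙ (cpD X z b m₀ k)).toReal ≤ ε := by
    intro n
    calc ∑ k ∈ Finset.range n, (ℙ (cpD X z b m₀ k)).toReal
        ≤ ∑ k ∈ Finset.range n,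
            ε * ∫ ω, (cpD X z b m₀ k).indicator (cpM X z b k) ω ∂ℙ :=
          Finset.sum_le_sum fun k _ => hDbound k
      _ = ε * ∑ k ∈ Finset.range n,
            ∫ ω, (cpD X z b m₀ k).indicator (cpM X z b k) ω ∂ℙ := by
          rw [Finset.mul_sum]
      _ ≤ ε * 1 := mul_le_mul_of_nonneg_left (hSumInt n) hεnn
      _ = ε := mul_one ε
  -- the union of the disjoint pieces covers the event
  have hsub : {ω | ∃ k, m₀ ≤ k ∧ cpS X z b k ω ≤ 0} ⊆ ⋃ k, cpD X z b m₀ k := by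
    intro ω hω
    have hex : ∃ j, m₀ ≤ j ∧ cpS X z b j ω ≤ 0 := hω
    refine Set.mem_iUnion.2 ⟨Nat.find hex, (Nat.find_spec hex).1, (Nat.find_spec hex).2,
      fun i hi hij => ?_⟩
    by_contra h'
    exact Nat.find_min hex hij ⟨hi, le_of_not_gt h'⟩
  have hdisj : Pairwise (Function.onFun Disjoint (cpD X z b m₀)) := by
    have haux : ∀ k l, k < l → Disjoint (cpD X z b m₀ k) (cpD X z b m₀ l) := by
      intro k l hkl
      rw [Set.disjoint_left]
      intro ω hk hl
      exact absurd (hl.2.2 k hk.1 hkl) (not_lt.2 hk.2.1)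
    intro k l hne
    rcases hne.lt_or_gt with h | h
    · exact haux k l h
    · exact (haux l k h).symm
  calc ℙ {ω | ∃ k, m₀ ≤ k ∧ cpS X z b k ω ≤ 0}
      ≤ ℙ (⋃ k, cpD X z b m₀ k) := measure_mono hsub
    _ = ∑' k, ℙ (cpD X z b m₀ k) := measure_iUnion hdisj (cpD_meas X z b m₀ hmeas)
    _ ≤ ENNReal.ofReal ε := by
        rw [ENNReal.tsum_eq_iSup_sum]
        apply iSup_le
        intro s
        obtain ⟨n, hs⟩ := s.exists_nat_subset_range
        calc ∑ k ∈ s, ℙ (cpD X z b m₀ k)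
            ≤ ∑ k ∈ Finset.range n, ℙ (cpD X z b m₀ k) :=
              Finset.sum_le_sum_of_subset hs
          _ = ENNReal.ofReal (∑ k ∈ Finset.range n, (ℙ (cpD X z b m₀ k)).toReal) := by
              rw [ENNReal.ofReal_sum_of_nonneg fun i _ => ENNReal.toReal_nonneg]
              exact Finset.sum_congr rfl fun k _ =>
                (ENNReal.ofReal_toReal (measure_ne_top ℙ _)).symm
          _ ≤ ENNReal.ofReal ε := ENNReal.ofReal_le_ofReal (hPsum n)

end Aux5

lemma tailLen_spec (X : ℕ → ℝ) (b : ℝ) (n : ℕ) :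
    tailLen X b n ≤ n ∧ ∀ h' ≤ n,
      (∑ i ∈ Finset.Ico (n - h') n, (X i - b / 2))
        ≤ ∑ i ∈ Finset.Ico (n - tailLen X b n) n, (X i - b / 2) := by
  have hne : {h : ℕ | h ≤ n ∧ ∀ h' ≤ n,
      (∑ i ∈ Finset.Ico (n - h') n, (X i - b / 2))
        ≤ ∑ i ∈ Finset.Ico (n - h) n, (X i - b / 2)}.Nonempty := by
    obtain ⟨h, hh, hmax⟩ := Finset.exists_max_image (Finset.range (n + 1))
      (fun h => ∑ i ∈ Finset.Ico (n - h) n, (X i - b / 2)) ⟨0, Finset.mem_range.2 n.succ_pos⟩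
    exact ⟨h, Nat.lt_succ_iff.1 (Finset.mem_range.1 hh),
      fun h' hh' => hmax h' (Finset.mem_range.2 (Nat.lt_succ_of_le hh'))⟩
  exact Nat.sInf_mem hne

end CPaux

/-- Univariate changepoint model: `X 0, X 1, …` (representing `X₁, X₂, …`) are independent,
`N(0,1)` before the changepoint `z` (i.e. for `i < z`) and `N(θ,1)` after (for `i ≥ z`),
with `θ > 0`.  Let `0 < b ≤ θ` and `α ∈ (0,1)`, and let `N` be a stopping time for the
natural filtration (the event `{N = n}` belongs to the σ-algebra generated by the first
`n` observations) with `P(N < z) ≤ α/2`.  Then the confidence interval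
`[N - t_{N,b} - 8 log(2/α)/b², N]` contains `z` with probability at least `1 - α`. -/
theorem changepoint_confidence_interval_coverage
    {Ω : Type*} [MeasureSpace Ω] [IsProbabilityMeasure (ℙ : Measure Ω)]
    (z : ℕ) (θ : ℝ) (hθ : 0 < θ) (X : ℕ → Ω → ℝ) (hmeas : ∀ i, Measurable (X i))
    (hindep : iIndepFun X ℙ)
    (hpre : ∀ i < z, Measure.map (X i) ℙ = gaussianReal 0 1)
    (hpost : ∀ i, z ≤ i → Measure.map (X i) ℙ = gaussianReal θ 1)
    (b : ℝ) (hb : 0 < b) (hbθ : b ≤ θ)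
    (α : ℝ) (hα : 0 < α) (hα1 : α < 1)
    (N : Ω → ℕ)
    (hstop : ∀ n : ℕ,
      MeasurableSet[⨆ i ∈ Finset.range n, MeasurableSpace.comap (X i) Real.measurableSpace]
        {ω | N ω = n})
    (hfalse : ℙ {ω | N ω < z} ≤ ENNReal.ofReal (α / 2)) :
    ENNReal.ofReal (1 - α)
      ≤ ℙ {ω | (N ω : ℝ) - (tailLen (fun i => X i ω) b (N ω) : ℝ)
                - 8 * Real.log (2 / α) / b ^ 2 ≤ (z : ℝ)
              ∧ (z : ℝ) ≤ (N ω : ℝ)} := by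
  classical
  have hb2 : (0 : ℝ) < b ^ 2 := by positivity
  have hL0 : 0 < Real.log (2 / α) :=
    Real.log_pos (by rw [lt_div_iff₀ hα]; linarith)
  set c : ℝ := 8 * Real.log (2 / α) / b ^ 2 with hc
  have hc0 : 0 ≤ c := by positivity
  set m₀ : ℕ := Nat.floor c + 1 with hm₀def
  have hm₀1 : 1 ≤ m₀ := Nat.le_add_left 1 _
  have hcm₀ : c < (m₀ : ℝ) := by
    rw [hm₀def]; push_cast; exact Nat.lt_floor_add_one c
  have hεα : Real.exp (-(m₀ : ℝ) * b ^ 2 / 8) ≤ α / 2 := by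
    have h1 : -(m₀ : ℝ) * b ^ 2 / 8 ≤ -Real.log (2 / α) := by
      rw [hc] at hcm₀
      rw [div_lt_iff₀ hb2] at hcm₀
      nlinarith
    calc Real.exp (-(m₀ : ℝ) * b ^ 2 / 8) ≤ Real.exp (-Real.log (2 / α)) :=
          Real.exp_le_exp.2 h1
      _ = α / 2 := by
          rw [Real.exp_neg, Real.exp_log (by positivity), inv_div]
  -- measurability of the bad sets
  have hNmeas : ∀ n, MeasurableSet {ω | N ω = n} := by
    intro n
    have hle : (⨆ i ∈ Finset.range n, MeasurableSpace.comap (X i) Real.measurableSpace)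
        ≤ (MeasureSpace.toMeasurableSpace : MeasurableSpace Ω) := by
      apply iSup_le; intro i; apply iSup_le; intro _; exact (hmeas i).comap_le
    exact hle _ (hstop n)
  have hNltz : MeasurableSet {ω | N ω < z} := by
    have : {ω | N ω < z} = ⋃ n, ⋃ (_ : n < z), {ω | N ω = n} := by
      ext ω; simp
    rw [this]
    exact MeasurableSet.iUnion fun n => MeasurableSet.iUnion fun _ => hNmeas n
  have hUmeas : MeasurableSet {ω | ∃ k, m₀ ≤ k ∧ cpS X z b k ω ≤ 0} := by
    have : {ω | ∃ k, m₀ ≤ k ∧ cpS X z b k ω ≤ 0}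
        = ⋃ k, ⋃ (_ : m₀ ≤ k), {ω | cpS X z b k ω ≤ 0} := by
      ext ω; simp
    rw [this]
    exact MeasurableSet.iUnion fun k => MeasurableSet.iUnion fun _ =>
      measurableSet_le (cpS_meas X z b hmeas k) measurable_const
  have hU := key_bound X z m₀ hb hbθ hm₀1 hmeas hindep hpost
  have hU2 : ℙ {ω | ∃ k, m₀ ≤ k ∧ cpS X z b k ω ≤ 0} ≤ ENNReal.ofReal (α / 2) :=
    hU.trans (ENNReal.ofReal_le_ofReal hεα)
  set Bad : Set Ω := {ω | N ω < z} ∪ {ω | ∃ k, m₀ ≤ k ∧ cpS X z b k ω ≤ 0} with hBad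
  have hBadMeas : MeasurableSet Bad := hNltz.union hUmeas
  have hBadBound : ℙ Bad ≤ ENNReal.ofReal α := by
    calc ℙ Bad ≤ ℙ {ω | N ω < z} + ℙ {ω | ∃ k, m₀ ≤ k ∧ cpS X z b k ω ≤ 0} :=
          measure_union_le _ _
      _ ≤ ENNReal.ofReal (α / 2) + ENNReal.ofReal (α / 2) := add_le_add hfalse hU2
      _ = ENNReal.ofReal α := by
          rw [← ENNReal.ofReal_add (by linarith) (by linarith)]
          norm_num
  -- complement of Bad is contained in the coverage event
  have hsub : Badᶜ ⊆ {ω | (N ω : ℝ) - (tailLen (fun i => X i ω) b (N ω) : ℝ)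
                - 8 * Real.log (2 / α) / b ^ 2 ≤ (z : ℝ)
              ∧ (z : ℝ) ≤ (N ω : ℝ)} := by
    intro ω hω
    rw [hBad, Set.mem_compl_iff, Set.mem_union, not_or] at hω
    obtain ⟨h1, h2⟩ := hω
    have hzN : z ≤ N ω := not_lt.1 h1
    refine ⟨?_, Nat.cast_le.2 hzN⟩
    by_contra hcon
    push_neg at hcon
    apply h2
    obtain ⟨ht_le, hmax⟩ := tailLen_spec (fun i => X i ω) b (N ω)
    set n := N ω with hn
    set t := tailLen (fun i => X i ω) b n with ht
    have h3 : (z : ℝ) + c < (n : ℝ) - (t : ℝ) := by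
      rw [hc]; linarith
    have h4 : (z : ℝ) < ((n - t : ℕ) : ℝ) := by
      rw [Nat.cast_sub ht_le]; linarith
    have hznt : z < n - t := by exact_mod_cast h4
    set k := n - t - z with hk
    have hzk : z + k = n - t := by omega
    have hkc : c < (k : ℝ) := by
      have hkr : (k : ℝ) = ((n - t : ℕ) : ℝ) - (z : ℝ) := by
        rw [hk, Nat.cast_sub hznt.le]
      rw [hkr, Nat.cast_sub ht_le]
      linarith
    have hm₀k : m₀ ≤ k := by
      have hfl : (⌊c⌋₊ : ℝ) ≤ c := Nat.floor_le hc0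
      have : (⌊c⌋₊ : ℝ) < (k : ℝ) := lt_of_le_of_lt hfl hkc
      have := Nat.cast_lt.1 this
      omega
    have hmax' := hmax (n - z) (Nat.sub_le n z)
    rw [Nat.sub_sub_self hzN] at hmax'
    have hcons := Finset.sum_Ico_consecutive (fun i => X i ω - b / 2)
      (hznt.le : z ≤ n - t) (Nat.sub_le n t)
    have hS : cpS X z b k ω ≤ 0 := by
      have heq : cpS X z b k ω = ∑ i ∈ Finset.Ico z (n - t), (X i ω - b / 2) := by
        rw [cpS, hzk]
      rw [heq]
      have := hcons
      linarith
    exact ⟨k, hm₀k, hS⟩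
  calc ENNReal.ofReal (1 - α) = 1 - ENNReal.ofReal α := by
        rw [← ENNReal.ofReal_one, ← ENNReal.ofReal_sub _ hα.le]
    _ ≤ 1 - ℙ Bad := tsub_le_tsub_left hBadBound 1
    _ = ℙ Badᶜ := (prob_compl_eq_one_sub hBadMeas).symm
    _ ≤ ℙ _ := measure_mono hsub
end

section
/- Let κ > 0 and let φ₁, φ₃, φ₄ be reals with φ₁ ≥ 4κ, φ₃ ≥ 4κ and 0 ≤ φ₄ ≤ κ, and let α ∈ ℝ. Let U ~ N(0, φ₁), Y ~ N(α·φ₃, φ₃) and Z ~ N(α·φ₄, φ₄) be independent real random variables. Then P( |U + Y + Z| / √(φ₁ + φ₃ + φ₄) ≥ |Y| / √φ₃ ) ≤ exp( −κ·α²/12 ). -/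
open MeasureTheory ProbabilityTheory
open MeasureTheory ProbabilityTheory Real Set
open scoped NNReal ENNReal

lemma pdf_mul (m₁ m₂ : ℝ) (v₁ v₂ : ℝ≥0) (hv₁ : v₁ ≠ 0) (hv₂ : v₂ ≠ 0) (y x : ℝ) :
    gaussianPDFReal m₁ v₁ x * gaussianPDFReal m₂ v₂ (y - x)
      = gaussianPDFReal (m₁ + m₂) (v₁ + v₂) y *
        gaussianPDFReal ((m₁ * v₂ + (y - m₂) * v₁) / (v₁ + v₂)) (v₁ * v₂ / (v₁ + v₂)) x := by
  have h1 : (0:ℝ) < v₁ := lt_of_le_of_ne (v₁.coe_nonneg) (by exact_mod_cast (Ne.symm hv₁))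
  have h2 : (0:ℝ) < v₂ := lt_of_le_of_ne (v₂.coe_nonneg) (by exact_mod_cast (Ne.symm hv₂))
  have hV : (0:ℝ) < (v₁:ℝ) + v₂ := by linarith
  simp only [gaussianPDFReal, NNReal.coe_add, NNReal.coe_div, NNReal.coe_mul]
  rw [mul_mul_mul_comm, ← Real.exp_add, mul_mul_mul_comm, ← Real.exp_add]
  congr 1
  · rw [← mul_inv, ← mul_inv, ← Real.sqrt_mul (by positivity), ← Real.sqrt_mul (by positivity)]
    congr 2
    field_simp
  · rw [Real.exp_eq_exp]
    field_simp
    ring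


lemma lintegral_pdf_conv (m₁ m₂ : ℝ) (v₁ v₂ : ℝ≥0) (hv₁ : v₁ ≠ 0) (hv₂ : v₂ ≠ 0) (y : ℝ) :
    ∫⁻ x, gaussianPDF m₁ v₁ x * gaussianPDF m₂ v₂ (y - x)
      = gaussianPDF (m₁ + m₂) (v₁ + v₂) y := by
  have hv' : v₁ * v₂ / (v₁ + v₂) ≠ 0 := by
    positivity
  simp only [gaussianPDF]
  calc ∫⁻ x, ENNReal.ofReal (gaussianPDFReal m₁ v₁ x) *
        ENNReal.ofReal (gaussianPDFReal m₂ v₂ (y - x))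
      = ∫⁻ x, ENNReal.ofReal (gaussianPDFReal (m₁ + m₂) (v₁ + v₂) y) *
          ENNReal.ofReal (gaussianPDFReal ((m₁ * v₂ + (y - m₂) * v₁) / (v₁ + v₂))
            (v₁ * v₂ / (v₁ + v₂)) x) := by
        congr 1; ext x
        rw [← ENNReal.ofReal_mul (gaussianPDFReal_nonneg _ _ _),
          ← ENNReal.ofReal_mul (gaussianPDFReal_nonneg _ _ _), pdf_mul _ _ _ _ hv₁ hv₂]
    _ = ENNReal.ofReal (gaussianPDFReal (m₁ + m₂) (v₁ + v₂) y) := by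
        rw [lintegral_const_mul _ ((measurable_gaussianPDFReal _ _).ennreal_ofReal),
          lintegral_gaussianPDFReal_eq_one _ hv', mul_one]

lemma gaussianReal_conv (m₁ m₂ : ℝ) (v₁ v₂ : ℝ≥0) :
    Measure.map (fun p : ℝ × ℝ => p.1 + p.2) ((gaussianReal m₁ v₁).prod (gaussianReal m₂ v₂))
      = gaussianReal (m₁ + m₂) (v₁ + v₂) := by
  by_cases hv₁ : v₁ = 0
  · subst hv₁
    rw [gaussianReal_zero_var, Measure.dirac_prod,
      Measure.map_map measurable_add (measurable_prodMk_left), zero_add]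
    have : ((fun p : ℝ × ℝ => p.1 + p.2) ∘ fun y => (m₁, y)) = (m₁ + ·) := rfl
    rw [this, gaussianReal_map_const_add, add_comm m₂ m₁]
  by_cases hv₂ : v₂ = 0
  · subst hv₂
    rw [gaussianReal_zero_var, Measure.prod_dirac,
      Measure.map_map measurable_add (measurable_prodMk_right), add_zero]
    have : ((fun p : ℝ × ℝ => p.1 + p.2) ∘ fun x => (x, m₂)) = (· + m₂) := rfl
    rw [this, gaussianReal_map_add_const]
  -- main case
  ext s hs
  rw [Measure.map_apply measurable_add hs,
    Measure.prod_apply (measurable_add hs)]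
  have h1 : ∀ x : ℝ, (gaussianReal m₂ v₂) (Prod.mk x ⁻¹' ((fun p : ℝ × ℝ => p.1 + p.2) ⁻¹' s))
      = ∫⁻ y, gaussianPDF m₂ v₂ (y - x) * s.indicator 1 y := by
    intro x
    have hpre : (Prod.mk x ⁻¹' ((fun p : ℝ × ℝ => p.1 + p.2) ⁻¹' s)) = (x + ·) ⁻¹' s := rfl
    rw [hpre, ← Measure.map_apply (measurable_const_add x) hs, gaussianReal_map_const_add,
      gaussianReal_apply _ hv₂]
    rw [← lintegral_indicator hs]
    congr 1; ext y
    by_cases hy : y ∈ s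
    · simp only [indicator_of_mem hy, Pi.one_apply, mul_one]
      have : gaussianPDFReal (m₂ + x) v₂ y = gaussianPDFReal m₂ v₂ (y - x) := by
        simp only [gaussianPDFReal]
        ring_nf
      simp [gaussianPDF, this]
    · simp [indicator_of_notMem hy]
  simp_rw [h1]
  rw [gaussianReal_of_var_ne_zero _ hv₁,
    lintegral_withDensity_eq_lintegral_mul _ (measurable_gaussianPDF _ _)
      ?_]
  · have hVne : v₁ + v₂ ≠ 0 := by simp [hv₁]
    rw [gaussianReal_apply _ hVne s, ← lintegral_indicator hs]
    have hmeas : Measurable (Function.uncurry fun x y =>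
        gaussianPDF m₁ v₁ x * (gaussianPDF m₂ v₂ (y - x) * s.indicator 1 y)) := by
      apply ((measurable_gaussianPDF m₁ v₁).comp measurable_fst).mul
      exact ((measurable_gaussianPDF m₂ v₂).comp (measurable_snd.sub measurable_fst)).mul
        ((measurable_one.indicator hs).comp measurable_snd)
    calc ∫⁻ x, gaussianPDF m₁ v₁ x * ∫⁻ y, gaussianPDF m₂ v₂ (y - x) * s.indicator 1 y
        = ∫⁻ x, ∫⁻ y, gaussianPDF m₁ v₁ x * (gaussianPDF m₂ v₂ (y - x) * s.indicator 1 y) := by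
          congr 1; ext x
          rw [lintegral_const_mul]
          exact ((measurable_gaussianPDF m₂ v₂).comp (measurable_id.sub measurable_const)).mul
            (measurable_one.indicator hs)
      _ = ∫⁻ y, ∫⁻ x, gaussianPDF m₁ v₁ x * (gaussianPDF m₂ v₂ (y - x) * s.indicator 1 y) :=
          lintegral_lintegral_swap hmeas.aemeasurable
      _ = ∫⁻ y, gaussianPDF (m₁ + m₂) (v₁ + v₂) y * s.indicator 1 y := by
          congr 1; ext y
          simp_rw [← mul_assoc]
          have h : Measurable fun x : ℝ => gaussianPDF m₁ v₁ x * gaussianPDF m₂ v₂ (y - x) :=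
            (measurable_gaussianPDF m₁ v₁).mul
              ((measurable_gaussianPDF m₂ v₂).comp (measurable_const.sub measurable_id))
          rw [lintegral_mul_const _ h, lintegral_pdf_conv _ _ _ _ hv₁ hv₂]
      _ = ∫⁻ y, s.indicator (gaussianPDF (m₁ + m₂) (v₁ + v₂)) y := by
          congr 1; ext y
          by_cases hy : y ∈ s <;> simp [hy]
  · exact Measurable.lintegral_prod_right <|
      ((measurable_gaussianPDF m₂ v₂).comp (measurable_snd.sub measurable_fst)).mul
        ((measurable_one.indicator hs).comp measurable_snd)


lemma gaussianReal_Iic_zero_of_mean_zero (v : ℝ≥0) (hv : v ≠ 0) :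
    gaussianReal 0 v (Iic 0) = 1/2 := by
  set μ0 := gaussianReal 0 v
  have hmapneg : Measure.map (fun x : ℝ => -x) μ0 = μ0 := by
    have h := gaussianReal_map_const_mul (μ := 0) (v := v) (-1)
    have h2 : ∀ w : ℝ≥0, (w:ℝ) = 1 → gaussianReal (-1 * 0) (w * v) = gaussianReal 0 v := by
      intro w hw
      have hw1 : w = 1 := by ext; simpa using hw
      simp [hw1]
    have hfun : (fun x : ℝ => (-1) * x) = fun x : ℝ => -x := by
      funext x; ring
    rw [h2 _ (by norm_num), hfun] at h
    exact h
  have hIci : μ0 (Ici 0) = μ0 (Iic 0) := by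
    conv_rhs => rw [← hmapneg]
    rw [Measure.map_apply measurable_neg measurableSet_Iic]
    congr 1
    ext x; simp
  have hatom : μ0 {0} = 0 :=
    gaussianReal_absolutelyContinuous 0 hv (measure_singleton 0)
  have hIoi : μ0 (Ici 0) = μ0 (Ioi 0) := by
    apply le_antisymm
    · have : Ici (0:ℝ) = {0} ∪ Ioi 0 := by
        ext x; simp [le_iff_lt_or_eq, or_comm, eq_comm]
      rw [this]
      calc μ0 ({0} ∪ Ioi 0) ≤ μ0 {0} + μ0 (Ioi 0) := measure_union_le _ _
        _ = μ0 (Ioi 0) := by rw [hatom, zero_add]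
    · exact measure_mono Ioi_subset_Ici_self
  have hsum : μ0 (Iic 0) + μ0 (Ioi 0) = 1 := by
    rw [← measure_univ (μ := μ0), ← Iic_union_Ioi (a := (0:ℝ))]
    exact (measure_union (Iic_disjoint_Ioi le_rfl) measurableSet_Ioi).symm
  have h2 : μ0 (Iic 0) + μ0 (Iic 0) = 1 := by rw [← hIci, hIoi] at hsum ⊢; exact hsum
  have := h2
  rw [← two_mul] at this
  rw [← this]
  rw [ENNReal.eq_div_iff (by norm_num) (by norm_num)]

lemma gaussianReal_Iic_le (m : ℝ) (v : ℝ≥0) (hv : v ≠ 0) (hm : 0 ≤ m) :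
    gaussianReal m v (Iic 0) ≤ ENNReal.ofReal (Real.exp (-m^2 / (2*v)) * (1/2)) := by
  have hvpos : (0:ℝ) < v := lt_of_le_of_ne v.coe_nonneg (by exact_mod_cast (Ne.symm hv))
  rw [gaussianReal_apply _ hv]
  have hb : ∀ x ∈ Iic (0:ℝ), gaussianPDF m v x
      ≤ ENNReal.ofReal (Real.exp (-m^2 / (2*v))) * gaussianPDF 0 v x := by
    intro x hx
    simp only [gaussianPDF, mem_Iic] at hx ⊢
    rw [← ENNReal.ofReal_mul (Real.exp_nonneg _)]
    apply ENNReal.ofReal_le_ofReal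
    simp only [gaussianPDFReal]
    rw [mul_left_comm]
    refine mul_le_mul_of_nonneg_left ?_ (by positivity)
    rw [← Real.exp_add, Real.exp_le_exp, ← add_div]
    gcongr
    nlinarith [mul_nonneg (neg_nonneg.2 hx) hm]
  calc ∫⁻ x in Iic 0, gaussianPDF m v x
      ≤ ∫⁻ x in Iic 0, ENNReal.ofReal (Real.exp (-m^2 / (2*v))) * gaussianPDF 0 v x :=
        setLIntegral_mono ((measurable_gaussianPDF 0 v).const_mul _) hb
    _ = ENNReal.ofReal (Real.exp (-m^2 / (2*v))) * gaussianReal 0 v (Iic 0) := by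
        rw [lintegral_const_mul _ (measurable_gaussianPDF 0 v), ← gaussianReal_apply _ hv]
    _ = ENNReal.ofReal (Real.exp (-m^2 / (2*v))) * ENNReal.ofReal (1/2) := by
        rw [gaussianReal_Iic_zero_of_mean_zero v hv]
        norm_num [ENNReal.ofReal_div_of_pos]
    _ = ENNReal.ofReal (Real.exp (-m^2 / (2*v)) * (1/2)) := by
        rw [ENNReal.ofReal_mul (Real.exp_nonneg _)]

lemma map_add_of_indepFun {Ω : Type*} [MeasureSpace Ω] [IsProbabilityMeasure (ℙ : Measure Ω)]
    {X W : Ω → ℝ} (hX : Measurable X) (hW : Measurable W) (h : IndepFun X W ℙ) :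
    Measure.map (fun ω => X ω + W ω) ℙ
      = Measure.map (fun p : ℝ × ℝ => p.1 + p.2) ((Measure.map X ℙ).prod (Measure.map W ℙ)) := by
  rw [← (indepFun_iff_map_prod_eq_prod_map_map hX.aemeasurable hW.aemeasurable).mp h,
    Measure.map_map measurable_add (hX.prodMk hW)]
  rfl


lemma map_lin {Ω : Type*} [MeasureSpace Ω] [IsProbabilityMeasure (ℙ : Measure Ω)]
    (φ₁ φ₃ φ₄ α : ℝ) (h1 : 0 ≤ φ₁) (h3 : 0 ≤ φ₃) (h4 : 0 ≤ φ₄)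
    (U Y Z : Ω → ℝ) (hUm : Measurable U) (hYm : Measurable Y) (hZm : Measurable Z)
    (hindep : iIndepFun ![U, Y, Z] ℙ)
    (hU : Measure.map U ℙ = gaussianReal 0 φ₁.toNNReal)
    (hY : Measure.map Y ℙ = gaussianReal (α * φ₃) φ₃.toNNReal)
    (hZ : Measure.map Z ℙ = gaussianReal (α * φ₄) φ₄.toNNReal)
    (p q r : ℝ) :
    ∃ w : ℝ≥0, (w : ℝ) = p^2*φ₁ + q^2*φ₃ + r^2*φ₄ ∧
      Measure.map (fun ω => p * U ω + q * Y ω + r * Z ω) ℙ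
        = gaussianReal (q * (α * φ₃) + r * (α * φ₄)) w := by
  have hmeas : ∀ i, Measurable (![U, Y, Z] i) := by
    intro i; fin_cases i <;> assumption
  obtain ⟨w₁, hw₁, hpU⟩ : ∃ w : ℝ≥0, (w:ℝ) = p^2*φ₁ ∧
      Measure.map (fun ω => p * U ω) ℙ = gaussianReal 0 w := by
    refine ⟨_, ?_, by
      rw [show (fun ω => p * U ω) = (fun x => p * x) ∘ U from rfl,
        ← Measure.map_map (measurable_const_mul p) hUm, hU,
        gaussianReal_map_const_mul, mul_zero]⟩
    push_cast
    rw [Real.coe_toNNReal _ h1]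
  obtain ⟨w₂, hw₂, hqY⟩ : ∃ w : ℝ≥0, (w:ℝ) = q^2*φ₃ ∧
      Measure.map (fun ω => q * Y ω) ℙ = gaussianReal (q * (α * φ₃)) w := by
    refine ⟨_, ?_, by
      rw [show (fun ω => q * Y ω) = (fun x => q * x) ∘ Y from rfl,
        ← Measure.map_map (measurable_const_mul q) hYm, hY,
        gaussianReal_map_const_mul]⟩
    push_cast
    rw [Real.coe_toNNReal _ h3]
  obtain ⟨w₃, hw₃, hrZ⟩ : ∃ w : ℝ≥0, (w:ℝ) = r^2*φ₄ ∧
      Measure.map (fun ω => r * Z ω) ℙ = gaussianReal (r * (α * φ₄)) w := by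
    refine ⟨_, ?_, by
      rw [show (fun ω => r * Z ω) = (fun x => r * x) ∘ Z from rfl,
        ← Measure.map_map (measurable_const_mul r) hZm, hZ,
        gaussianReal_map_const_mul]⟩
    push_cast
    rw [Real.coe_toNNReal _ h4]
  have hUY : IndepFun U Y ℙ := hindep.indepFun (show (0 : Fin 3) ≠ 1 by decide)
  have hpUqY : IndepFun (fun ω => p * U ω) (fun ω => q * Y ω) ℙ :=
    hUY.comp (measurable_const_mul p) (measurable_const_mul q)
  have hUYZ : IndepFun (fun ω => (U ω, Y ω)) Z ℙ :=
    hindep.indepFun_prodMk hmeas 0 1 2 (by decide) (by decide)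
  have hsumZ : IndepFun (fun ω => p * U ω + q * Y ω) (fun ω => r * Z ω) ℙ := by
    have := hUYZ.comp (φ := fun x : ℝ × ℝ => p * x.1 + q * x.2) (ψ := fun x => r * x)
      (by fun_prop) (measurable_const_mul r)
    exact this
  have hmap12 : Measure.map (fun ω => p * U ω + q * Y ω) ℙ
      = gaussianReal (0 + q * (α * φ₃)) (w₁ + w₂) := by
    rw [map_add_of_indepFun (hUm.const_mul p) (hYm.const_mul q) hpUqY, hpU, hqY,
      gaussianReal_conv]
  have hmap : Measure.map (fun ω => p * U ω + q * Y ω + r * Z ω) ℙ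
      = gaussianReal (0 + q * (α * φ₃) + r * (α * φ₄)) (w₁ + w₂ + w₃) := by
    rw [map_add_of_indepFun (X := fun ω => p * U ω + q * Y ω) ((hUm.const_mul p).add (hYm.const_mul q)) (hZm.const_mul r) hsumZ,
      hmap12, hrZ, gaussianReal_conv]
  refine ⟨w₁ + w₂ + w₃, ?_, by rw [hmap, zero_add]⟩
  push_cast
  rw [hw₁, hw₂, hw₃]


lemma key_ineq (κ s u φ₄ : ℝ) (hκ : 0 < κ) (hs : 4*κ ≤ s^2) (hu : 0 < u)
    (h40 : 0 ≤ φ₄) (h4 : φ₄ ≤ κ) (hP : 4*κ + φ₄ ≤ u*(2*s+u)) (hs0 : 0 < s) :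
    κ * (u*(s+u)) ≤ 3*(s*u - φ₄)^2 ∧ φ₄ < s*u := by
  set x := s*u with hx
  have hxpos : 0 < x := mul_pos hs0 hu
  have hw : 4*κ*u^2 ≤ x^2 := by nlinarith [sq_nonneg u]
  have hG : 0 ≤ x^2 + 8*κ*x - 16*κ^2 - 4*κ*φ₄ := by nlinarith
  have h72 : 0 ≤ 72*x - 52*κ - 36*φ₄ := by nlinarith [sq_nonneg (x - 6*κ), sq_nonneg x]
  have hId : 0 ≤ 11*x^2 - (24*φ₄+4*κ)*x + 12*φ₄^2 := by
    nlinarith [mul_nonneg (sub_nonneg.2 h4) h72, sq_nonneg (x - 2*κ)]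
  constructor
  · nlinarith
  · nlinarith

lemma arith_minus (κ s T φ₄ β : ℝ) (hκ : 0 < κ) (hs : 0 < s) (hsT : s < T)
    (hs2 : 4*κ ≤ s^2) (h40 : 0 ≤ φ₄) (h4 : φ₄ ≤ κ) (hφ₁ : 4*κ + φ₄ ≤ T^2 - s^2) :
    0 < s*T - s^2 - φ₄ ∧
      κ*β^2/12 ≤ (β*((s*T - s^2 - φ₄)/T))^2 / (2*(2*(T-s)/T)) := by
  have hT : 0 < T := hs.trans hsT
  have hu : 0 < T - s := by linarith
  have hP : 4*κ + φ₄ ≤ (T-s)*(2*s+(T-s)) := by nlinarith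
  obtain ⟨hkey, hpos⟩ := key_ineq κ s (T-s) φ₄ hκ hs2 hu h40 h4 hP hs
  have hsu : s*T - s^2 - φ₄ = s*(T-s) - φ₄ := by ring
  constructor
  · rw [hsu]; linarith
  · have e1 : (β*((s*T - s^2 - φ₄)/T))^2 / (2*(2*(T-s)/T))
        = β^2*(s*(T-s) - φ₄)^2/(4*(T-s)*T) := by
      field_simp
      ring
    rw [e1, div_le_div_iff₀ (by norm_num) (by positivity)]
    nlinarith [mul_le_mul_of_nonneg_left hkey (sq_nonneg β)]

lemma arith_plus (κ s T φ₄ β : ℝ) (hκ : 0 < κ) (hs : 0 < s) (hsT : s < T)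
    (hs2 : 4*κ ≤ s^2) (h40 : 0 ≤ φ₄) :
    0 < s*T + s^2 + φ₄ ∧
      κ*β^2/12 ≤ (β*((s*T + s^2 + φ₄)/T))^2 / (2*(2*(T+s)/T)) := by
  have hT : 0 < T := hs.trans hsT
  constructor
  · nlinarith
  · have e1 : (β*((s*T + s^2 + φ₄)/T))^2 / (2*(2*(T+s)/T))
        = β^2*(s*(T+s) + φ₄)^2/(4*(T+s)*T) := by
      field_simp
      ring
    rw [e1, div_le_div_iff₀ (by norm_num) (by positivity)]
    nlinarith [sq_nonneg (β*(s*(T+s))), mul_le_mul_of_nonneg_left hs2 (sq_nonneg (β*(T+s))),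
      mul_nonneg (mul_nonneg (sq_nonneg β) h40) (mul_nonneg (mul_nonneg hs.le hT.le) hT.le),
      mul_nonneg (mul_nonneg (sq_nonneg β) h40) h40, sq_nonneg (β*φ₄),
      mul_nonneg (mul_nonneg (mul_nonneg (sq_nonneg β) hs.le) hT.le) h40,
      mul_nonneg (mul_nonneg (mul_nonneg (sq_nonneg β) hs.le) hs.le) h40,
      mul_pos (mul_pos hs hT) (mul_pos hs hT), mul_pos hκ (mul_pos hs hT)]

lemma incl (s T ε u y z : ℝ) (hs : 0 < s) (hT : 0 < T)
    (h : |y|/s ≤ |u+y+z|/T) (hε : ε*y ≤ |y|) :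
    (-(1/T))*u + (ε/s - 1/T)*y + (-(1/T))*z ≤ 0 ∨
      (1/T)*u + (ε/s + 1/T)*y + (1/T)*z ≤ 0 := by
  have h1 : ε*y/s ≤ |u+y+z|/T := le_trans (by gcongr) h
  rcases abs_cases (u+y+z) with ⟨he, _⟩ | ⟨he, _⟩
  · left
    rw [he] at h1
    have hexp : (-(1/T))*u + (ε/s - 1/T)*y + (-(1/T))*z = ε*y/s - (u+y+z)/T := by
      field_simp
      ring
    rw [hexp]; linarith
  · right
    rw [he, neg_div] at h1
    have hexp : (1/T)*u + (ε/s + 1/T)*y + (1/T)*z = ε*y/s + (u+y+z)/T := by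
      field_simp
      ring
    rw [hexp]; linarith

lemma event_bound {Ω : Type*} [MeasureSpace Ω] [IsProbabilityMeasure (ℙ : Measure Ω)]
    (φ₁ φ₃ φ₄ α : ℝ) (h1 : 0 ≤ φ₁) (h3 : 0 ≤ φ₃) (h4 : 0 ≤ φ₄)
    (U Y Z : Ω → ℝ) (hUm : Measurable U) (hYm : Measurable Y) (hZm : Measurable Z)
    (hindep : iIndepFun ![U, Y, Z] ℙ)
    (hU : Measure.map U ℙ = gaussianReal 0 φ₁.toNNReal)
    (hY : Measure.map Y ℙ = gaussianReal (α * φ₃) φ₃.toNNReal)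
    (hZ : Measure.map Z ℙ = gaussianReal (α * φ₄) φ₄.toNNReal)
    (p q r C : ℝ)
    (hm : 0 < q * (α * φ₃) + r * (α * φ₄))
    (hv : 0 < p^2*φ₁ + q^2*φ₃ + r^2*φ₄)
    (hC : C ≤ (q * (α * φ₃) + r * (α * φ₄))^2 / (2*(p^2*φ₁ + q^2*φ₃ + r^2*φ₄))) :
    ℙ {ω | p * U ω + q * Y ω + r * Z ω ≤ 0} ≤ ENNReal.ofReal (Real.exp (-C) * (1/2)) := by
  obtain ⟨w, hw, hmap⟩ := map_lin φ₁ φ₃ φ₄ α h1 h3 h4 U Y Z hUm hYm hZm hindep hU hY hZ p q r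
  have hw0 : w ≠ 0 := by
    intro h0
    rw [h0] at hw
    simp only [NNReal.coe_zero] at hw
    linarith
  have hev : ℙ {ω | p * U ω + q * Y ω + r * Z ω ≤ 0}
      = (Measure.map (fun ω => p * U ω + q * Y ω + r * Z ω) ℙ) (Iic 0) := by
    rw [Measure.map_apply (by fun_prop) measurableSet_Iic]
    rfl
  rw [hev, hmap]
  calc gaussianReal (q * (α * φ₃) + r * (α * φ₄)) w (Iic 0)
      ≤ ENNReal.ofReal (Real.exp (-(q * (α * φ₃) + r * (α * φ₄))^2 / (2*w)) * (1/2)) :=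
        gaussianReal_Iic_le _ w hw0 hm.le
    _ ≤ ENNReal.ofReal (Real.exp (-C) * (1/2)) := by
        apply ENNReal.ofReal_le_ofReal
        apply mul_le_mul_of_nonneg_right _ (by norm_num)
        apply Real.exp_le_exp.mpr
        rw [hw, neg_div]
        linarith


/-- Let `κ > 0`, `φ₁ ≥ 4κ`, `φ₃ ≥ 4κ`, `0 ≤ φ₄ ≤ κ` and `α ∈ ℝ`.  Let
`U ~ N(0, φ₁)`, `Y ~ N(αφ₃, φ₃)` and `Z ~ N(αφ₄, φ₄)` be independent.  Then
`P(|U + Y + Z|/√(φ₁+φ₃+φ₄) ≥ |Y|/√φ₃) ≤ exp(-κα²/12)`. -/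
theorem normal_comparison_b
    {Ω : Type*} [MeasureSpace Ω] [IsProbabilityMeasure (ℙ : Measure Ω)]
    (κ φ₁ φ₃ φ₄ α : ℝ) (hκ : 0 < κ) (hφ₁ : 4 * κ ≤ φ₁) (hφ₃ : 4 * κ ≤ φ₃)
    (hφ₄0 : 0 ≤ φ₄) (hφ₄ : φ₄ ≤ κ)
    (U Y Z : Ω → ℝ) (hUm : Measurable U) (hYm : Measurable Y) (hZm : Measurable Z)
    (hindep : iIndepFun ![U, Y, Z] ℙ)
    (hU : Measure.map U ℙ = gaussianReal 0 φ₁.toNNReal)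
    (hY : Measure.map Y ℙ = gaussianReal (α * φ₃) φ₃.toNNReal)
    (hZ : Measure.map Z ℙ = gaussianReal (α * φ₄) φ₄.toNNReal) :
    ℙ {ω | |Y ω| / Real.sqrt φ₃ ≤ |U ω + Y ω + Z ω| / Real.sqrt (φ₁ + φ₃ + φ₄)}
      ≤ ENNReal.ofReal (Real.exp (-κ * α ^ 2 / 12)) := by
  have hφ₃pos : 0 < φ₃ := by linarith
  have hφ₁pos : 0 < φ₁ := by linarith
  have h10 : (0:ℝ) ≤ φ₁ := hφ₁pos.le
  have h30 : (0:ℝ) ≤ φ₃ := hφ₃pos.le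
  set s := Real.sqrt φ₃ with hsdef
  set T := Real.sqrt (φ₁ + φ₃ + φ₄) with hTdef
  have hs : 0 < s := Real.sqrt_pos.2 hφ₃pos
  have hs2 : s^2 = φ₃ := Real.sq_sqrt h30
  have hT : 0 < T := Real.sqrt_pos.2 (by linarith)
  have hT2 : T^2 = φ₁ + φ₃ + φ₄ := Real.sq_sqrt (by linarith)
  have hsT : s < T := by
    apply Real.sqrt_lt_sqrt h30
    linarith
  rcases eq_or_ne α 0 with hα0 | hα0
  · subst hα0
    have he0 : (-κ * (0:ℝ)^2/12) = 0 := by ring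
    rw [he0, Real.exp_zero, ENNReal.ofReal_one]
    exact prob_le_one
  have hC12 : Real.exp (-κ * α ^ 2 / 12) = Real.exp (-(κ * α^2/12)) := by ring_nf
  rw [hC12]
  -- common variance identities
  have hφ₁eq : φ₁ = T^2 - s^2 - φ₄ := by rw [hT2, hs2]; ring
  have harith_m := arith_minus κ s T φ₄ α hκ hs hsT (by rw [hs2]; exact hφ₃) hφ₄0 hφ₄
    (by rw [hT2, hs2]; linarith)
  have harith_p := arith_plus κ s T φ₄ α hκ hs hsT (by rw [hs2]; exact hφ₃) hφ₄0
  rcases hα0.lt_or_gt with hneg | hpos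
  · -- α < 0, ε = -1
    set β := -α with hβdef
    have hβ : 0 < β := by simp [hβdef]; linarith
    have harith_m' := arith_minus κ s T φ₄ β hκ hs hsT (by rw [hs2]; exact hφ₃) hφ₄0 hφ₄
      (by rw [hT2, hs2]; linarith)
    have harith_p' := arith_plus κ s T φ₄ β hκ hs hsT (by rw [hs2]; exact hφ₃) hφ₄0
    -- event 1 : plus type
    have hm₁ : ((-1)/s - 1/T) * (α * φ₃) + (-(1/T)) * (α * φ₄) = β*((s*T + s^2 + φ₄)/T) := by
      rw [← hs2, hβdef]
      field_simp
      ring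
    have hv₁ : (-(1/T))^2*φ₁ + ((-1)/s - 1/T)^2*φ₃ + (-(1/T))^2*φ₄ = 2*(T+s)/T := by
      rw [hφ₁eq, ← hs2]
      field_simp
      ring
    have hb₁ := event_bound φ₁ φ₃ φ₄ α h10 h30 hφ₄0 U Y Z hUm hYm hZm hindep hU hY hZ
      (-(1/T)) ((-1)/s - 1/T) (-(1/T)) (κ * α^2/12)
      (by rw [hm₁]; exact mul_pos hβ (div_pos harith_p'.1 hT))
      (by rw [hv₁]; apply div_pos (by linarith) hT)
      (by rw [hm₁, hv₁, show κ*α^2/12 = κ*β^2/12 by rw [hβdef]; ring]; exact harith_p'.2)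
    -- event 2 : minus type
    have hm₂ : ((-1)/s + 1/T) * (α * φ₃) + (1/T) * (α * φ₄) = β*((s*T - s^2 - φ₄)/T) := by
      rw [← hs2, hβdef]
      field_simp
      ring
    have hv₂ : (1/T)^2*φ₁ + ((-1)/s + 1/T)^2*φ₃ + (1/T)^2*φ₄ = 2*(T-s)/T := by
      rw [hφ₁eq, ← hs2]
      field_simp
      ring
    have hb₂ := event_bound φ₁ φ₃ φ₄ α h10 h30 hφ₄0 U Y Z hUm hYm hZm hindep hU hY hZ
      (1/T) ((-1)/s + 1/T) (1/T) (κ * α^2/12)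
      (by rw [hm₂]; exact mul_pos hβ (div_pos harith_m'.1 hT))
      (by rw [hv₂]; apply div_pos (by linarith) hT)
      (by rw [hm₂, hv₂, show κ*α^2/12 = κ*β^2/12 by rw [hβdef]; ring]; exact harith_m'.2)
    have hsub : {ω | |Y ω| / s ≤ |U ω + Y ω + Z ω| / T}
        ⊆ {ω | (-(1/T)) * U ω + ((-1)/s - 1/T) * Y ω + (-(1/T)) * Z ω ≤ 0}
          ∪ {ω | (1/T) * U ω + ((-1)/s + 1/T) * Y ω + (1/T) * Z ω ≤ 0} := by
      intro ω hω
      exact incl s T (-1) (U ω) (Y ω) (Z ω) hs hT hω (by rw [neg_one_mul]; exact neg_le_abs _)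
    calc ℙ {ω | |Y ω| / s ≤ |U ω + Y ω + Z ω| / T}
        ≤ ℙ ({ω | (-(1/T)) * U ω + ((-1)/s - 1/T) * Y ω + (-(1/T)) * Z ω ≤ 0}
          ∪ {ω | (1/T) * U ω + ((-1)/s + 1/T) * Y ω + (1/T) * Z ω ≤ 0}) := measure_mono hsub
      _ ≤ ℙ {ω | (-(1/T)) * U ω + ((-1)/s - 1/T) * Y ω + (-(1/T)) * Z ω ≤ 0}
          + ℙ {ω | (1/T) * U ω + ((-1)/s + 1/T) * Y ω + (1/T) * Z ω ≤ 0} := measure_union_le _ _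
      _ ≤ ENNReal.ofReal (Real.exp (-(κ * α^2/12)) * (1/2)) + ENNReal.ofReal (Real.exp (-(κ * α^2/12)) * (1/2)) :=
          add_le_add hb₁ hb₂
      _ = ENNReal.ofReal (Real.exp (-(κ * α^2/12))) := by
          rw [← ENNReal.ofReal_add (by positivity) (by positivity)]
          congr 1
          ring
  · -- α > 0, ε = 1
    have hm₁ : (1/s - 1/T) * (α * φ₃) + (-(1/T)) * (α * φ₄) = α*((s*T - s^2 - φ₄)/T) := by
      rw [← hs2]
      field_simp
      ring
    have hv₁ : (-(1/T))^2*φ₁ + (1/s - 1/T)^2*φ₃ + (-(1/T))^2*φ₄ = 2*(T-s)/T := by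
      rw [hφ₁eq, ← hs2]
      field_simp
      ring
    have hb₁ := event_bound φ₁ φ₃ φ₄ α h10 h30 hφ₄0 U Y Z hUm hYm hZm hindep hU hY hZ
      (-(1/T)) (1/s - 1/T) (-(1/T)) (κ * α^2/12)
      (by rw [hm₁]; exact mul_pos hpos (div_pos harith_m.1 hT))
      (by rw [hv₁]; apply div_pos (by linarith) hT)
      (by rw [hm₁, hv₁]; exact harith_m.2)
    have hm₂ : (1/s + 1/T) * (α * φ₃) + (1/T) * (α * φ₄) = α*((s*T + s^2 + φ₄)/T) := by
      rw [← hs2]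
      field_simp
    have hv₂ : (1/T)^2*φ₁ + (1/s + 1/T)^2*φ₃ + (1/T)^2*φ₄ = 2*(T+s)/T := by
      rw [hφ₁eq, ← hs2]
      field_simp
      ring
    have hb₂ := event_bound φ₁ φ₃ φ₄ α h10 h30 hφ₄0 U Y Z hUm hYm hZm hindep hU hY hZ
      (1/T) (1/s + 1/T) (1/T) (κ * α^2/12)
      (by rw [hm₂]; exact mul_pos hpos (div_pos harith_p.1 hT))
      (by rw [hv₂]; apply div_pos (by linarith) hT)
      (by rw [hm₂, hv₂]; exact harith_p.2)
    have hsub : {ω | |Y ω| / s ≤ |U ω + Y ω + Z ω| / T}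
        ⊆ {ω | (-(1/T)) * U ω + (1/s - 1/T) * Y ω + (-(1/T)) * Z ω ≤ 0}
          ∪ {ω | (1/T) * U ω + (1/s + 1/T) * Y ω + (1/T) * Z ω ≤ 0} := by
      intro ω hω
      exact incl s T 1 (U ω) (Y ω) (Z ω) hs hT hω (by rw [one_mul]; exact le_abs_self _)
    calc ℙ {ω | |Y ω| / s ≤ |U ω + Y ω + Z ω| / T}
        ≤ ℙ ({ω | (-(1/T)) * U ω + (1/s - 1/T) * Y ω + (-(1/T)) * Z ω ≤ 0}
          ∪ {ω | (1/T) * U ω + (1/s + 1/T) * Y ω + (1/T) * Z ω ≤ 0}) := measure_mono hsub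
      _ ≤ ℙ {ω | (-(1/T)) * U ω + (1/s - 1/T) * Y ω + (-(1/T)) * Z ω ≤ 0}
          + ℙ {ω | (1/T) * U ω + (1/s + 1/T) * Y ω + (1/T) * Z ω ≤ 0} := measure_union_le _ _
      _ ≤ ENNReal.ofReal (Real.exp (-(κ * α^2/12)) * (1/2)) + ENNReal.ofReal (Real.exp (-(κ * α^2/12)) * (1/2)) :=
          add_le_add hb₁ hb₂
      _ = ENNReal.ofReal (Real.exp (-(κ * α^2/12))) := by
          rw [← ENNReal.ofReal_add (by positivity) (by positivity)]
          congr 1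
          ring
end

section
/- Define w₁(φ₁, φ₂, φ₃) := ((φ₁ + φ₃)/φ₃²) · ( 1 + (√(φ₂ + φ₃) + √(φ₁ + φ₃))² / (φ₂ − φ₁) ) for reals with 0 ≤ φ₁ < φ₂ and φ₃ > 0. Then w₁ is monotone in each argument on this domain: (i) if φ₁ ≤ φ₁′ < φ₂ then w₁(φ₁, φ₂, φ₃) ≤ w₁(φ₁′, φ₂, φ₃); (ii) if φ₁ < φ₂ ≤ φ₂′ then w₁(φ₁, φ₂′, φ₃) ≤ w₁(φ₁, φ₂, φ₃); (iii) if 0 < φ₃ ≤ φ₃′ then w₁(φ₁, φ₂, φ₃′) ≤ w₁(φ₁, φ₂, φ₃). -/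
/-- `w₁(φ₁, φ₂, φ₃) = ((φ₁+φ₃)/φ₃²)(1 + (√(φ₂+φ₃) + √(φ₁+φ₃))²/(φ₂-φ₁))`. -/
noncomputable def w1 (φ₁ φ₂ φ₃ : ℝ) : ℝ :=
  (φ₁ + φ₃) / φ₃ ^ 2 *
    (1 + (Real.sqrt (φ₂ + φ₃) + Real.sqrt (φ₁ + φ₃)) ^ 2 / (φ₂ - φ₁))

lemma w1_eq (φ₁ φ₂ φ₃ : ℝ) (hφ₁ : 0 ≤ φ₁) (hφ₁₂ : φ₁ < φ₂) (hφ₃ : 0 < φ₃) :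
    w1 φ₁ φ₂ φ₃ =
      2 * (φ₁ + φ₃) * Real.sqrt (φ₂ + φ₃) /
        (φ₃ ^ 2 * (Real.sqrt (φ₂ + φ₃) - Real.sqrt (φ₁ + φ₃))) := by
  have hA0 : (0:ℝ) ≤ φ₁ + φ₃ := by linarith
  have hB0 : (0:ℝ) ≤ φ₂ + φ₃ := by linarith
  unfold w1
  set sA := Real.sqrt (φ₁ + φ₃) with hsA
  set sB := Real.sqrt (φ₂ + φ₃) with hsB
  have hA : sA ^ 2 = φ₁ + φ₃ := Real.sq_sqrt hA0
  have hB : sB ^ 2 = φ₂ + φ₃ := Real.sq_sqrt hB0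
  have hsA0 : 0 ≤ sA := Real.sqrt_nonneg _
  have hlt : sA < sB := Real.sqrt_lt_sqrt hA0 (by linarith)
  have h21 : φ₂ - φ₁ = sB ^ 2 - sA ^ 2 := by rw [hA, hB]; ring
  have h1 : sB - sA ≠ 0 := sub_ne_zero.mpr hlt.ne'
  have h2 : sB ^ 2 - sA ^ 2 ≠ 0 := by nlinarith
  have h3 : φ₃ ≠ 0 := hφ₃.ne'
  rw [h21, ← hA]
  field_simp
  ring

lemma w1_eq2 (φ₁ φ₂ φ₃ : ℝ) (hφ₁ : 0 ≤ φ₁) (hφ₁₂ : φ₁ < φ₂) (hφ₃ : 0 < φ₃) :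
    w1 φ₁ φ₂ φ₃ =
      2 * ((φ₁ + φ₃) * (φ₂ + φ₃) +
        (φ₁ + φ₃) * Real.sqrt (φ₁ + φ₃) * Real.sqrt (φ₂ + φ₃)) /
        (φ₃ ^ 2 * (φ₂ - φ₁)) := by
  have hA0 : (0:ℝ) ≤ φ₁ + φ₃ := by linarith
  have hB0 : (0:ℝ) ≤ φ₂ + φ₃ := by linarith
  rw [w1_eq φ₁ φ₂ φ₃ hφ₁ hφ₁₂ hφ₃]
  set sA := Real.sqrt (φ₁ + φ₃) with hsA
  set sB := Real.sqrt (φ₂ + φ₃) with hsB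
  have hA : sA ^ 2 = φ₁ + φ₃ := Real.sq_sqrt hA0
  have hB : sB ^ 2 = φ₂ + φ₃ := Real.sq_sqrt hB0
  have hsA0 : 0 ≤ sA := Real.sqrt_nonneg _
  have hlt : sA < sB := Real.sqrt_lt_sqrt hA0 (by linarith)
  have h21 : φ₂ - φ₁ = sB ^ 2 - sA ^ 2 := by rw [hA, hB]; ring
  have h1 : sB - sA ≠ 0 := sub_ne_zero.mpr hlt.ne'
  have h2 : sB ^ 2 - sA ^ 2 ≠ 0 := by nlinarith
  have h3 : φ₃ ≠ 0 := hφ₃.ne'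
  rw [h21, ← hA, ← hB]
  field_simp
  ring

/-- On the domain `0 ≤ φ₁ < φ₂`, `φ₃ > 0`, the quantity `w₁` is nondecreasing in `φ₁`
and nonincreasing in each of `φ₂` and `φ₃`. -/
theorem w1_monotone (φ₁ φ₂ φ₃ : ℝ) (hφ₁ : 0 ≤ φ₁) (hφ₁₂ : φ₁ < φ₂) (hφ₃ : 0 < φ₃) :
    (∀ φ₁' : ℝ, φ₁ ≤ φ₁' → φ₁' < φ₂ → w1 φ₁ φ₂ φ₃ ≤ w1 φ₁' φ₂ φ₃) ∧
    (∀ φ₂' : ℝ, φ₂ ≤ φ₂' → w1 φ₁ φ₂' φ₃ ≤ w1 φ₁ φ₂ φ₃) ∧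
    (∀ φ₃' : ℝ, φ₃ ≤ φ₃' → w1 φ₁ φ₂ φ₃' ≤ w1 φ₁ φ₂ φ₃) := by
  refine ⟨?_, ?_, ?_⟩
  · -- monotone in φ₁
    intro φ₁' h1 h2
    rw [w1_eq2 φ₁ φ₂ φ₃ hφ₁ hφ₁₂ hφ₃, w1_eq2 φ₁' φ₂ φ₃ (le_trans hφ₁ h1) h2 hφ₃]
    gcongr
    · have hs1 := Real.sqrt_nonneg (φ₁' + φ₃)
      have hs2 := Real.sqrt_nonneg (φ₂ + φ₃)
      nlinarith [mul_nonneg (mul_nonneg (by linarith : (0:ℝ) ≤ φ₁' + φ₃) hs1) hs2,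
        mul_nonneg (by linarith : (0:ℝ) ≤ φ₁' + φ₃) (by linarith : (0:ℝ) ≤ φ₂ + φ₃)]
    · linarith
    · linarith
  · -- antitone in φ₂
    intro φ₂' h2
    have hφ₁₂' : φ₁ < φ₂' := lt_of_lt_of_le hφ₁₂ h2
    rw [w1_eq φ₁ φ₂ φ₃ hφ₁ hφ₁₂ hφ₃, w1_eq φ₁ φ₂' φ₃ hφ₁ hφ₁₂' hφ₃]
    have hA0 : (0:ℝ) ≤ φ₁ + φ₃ := by linarith
    set sA := Real.sqrt (φ₁ + φ₃) with hsA
    set sB := Real.sqrt (φ₂ + φ₃) with hsB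
    set sB' := Real.sqrt (φ₂' + φ₃) with hsB'
    have hsA0 : 0 ≤ sA := Real.sqrt_nonneg _
    have hlt : sA < sB := Real.sqrt_lt_sqrt hA0 (by linarith)
    have hBB' : sB ≤ sB' := Real.sqrt_le_sqrt (by linarith)
    rw [div_le_div_iff₀ (mul_pos (pow_pos hφ₃ 2) (by linarith))
      (mul_pos (pow_pos hφ₃ 2) (by linarith))]
    have key : sB * sA ≤ sB' * sA := mul_le_mul_of_nonneg_right hBB' hsA0
    nlinarith [mul_le_mul_of_nonneg_left (sub_le_sub (mul_le_mul_of_nonneg_left hBB' hsA0) (le_refl (0:ℝ))) (le_of_lt hφ₃), sq_nonneg φ₃, mul_nonneg (mul_nonneg (by linarith : (0:ℝ) ≤ 2*(φ₁+φ₃)) (sq_nonneg φ₃)) (sub_nonneg.mpr key)]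
  · -- antitone in φ₃
    intro φ₃' h3
    have hφ₃' : 0 < φ₃' := lt_of_lt_of_le hφ₃ h3
    rw [w1_eq2 φ₁ φ₂ φ₃ hφ₁ hφ₁₂ hφ₃, w1_eq2 φ₁ φ₂ φ₃' hφ₁ hφ₁₂ hφ₃']
    set sA := Real.sqrt (φ₁ + φ₃) with hsA
    set sB := Real.sqrt (φ₂ + φ₃) with hsB
    set sA' := Real.sqrt (φ₁ + φ₃') with hsA'
    set sB' := Real.sqrt (φ₂ + φ₃') with hsB'
    have hA : sA ^ 2 = φ₁ + φ₃ := Real.sq_sqrt (by linarith)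
    have hB : sB ^ 2 = φ₂ + φ₃ := Real.sq_sqrt (by linarith)
    have hA' : sA' ^ 2 = φ₁ + φ₃' := Real.sq_sqrt (by linarith)
    have hB' : sB' ^ 2 = φ₂ + φ₃' := Real.sq_sqrt (by linarith)
    have haa : (φ₁ + φ₃') * φ₃ ≤ (φ₁ + φ₃) * φ₃' := by nlinarith
    have hbb : (φ₂ + φ₃') * φ₃ ≤ (φ₂ + φ₃) * φ₃' := by nlinarith
    have p1 : (φ₁ + φ₃') * (φ₂ + φ₃') * φ₃ ^ 2 ≤ (φ₁ + φ₃) * (φ₂ + φ₃) * φ₃' ^ 2 := by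
      nlinarith [mul_le_mul haa hbb (mul_nonneg (by linarith) hφ₃.le) (mul_nonneg (by linarith) hφ₃'.le)]
    have p2 : (φ₁ + φ₃') * sA' * sB' * φ₃ ^ 2 ≤ (φ₁ + φ₃) * sA * sB * φ₃' ^ 2 := by
      have hcube : ((φ₁ + φ₃') * φ₃) ^ 3 ≤ ((φ₁ + φ₃) * φ₃') ^ 3 :=
        pow_le_pow_left₀ (mul_nonneg (by linarith) hφ₃.le) haa 3
      have hq : (φ₁ + φ₃') ^ 3 * (φ₂ + φ₃') * φ₃ ^ 4 ≤ (φ₁ + φ₃) ^ 3 * (φ₂ + φ₃) * φ₃' ^ 4 := by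
        nlinarith [mul_le_mul hcube hbb (mul_nonneg (by linarith) hφ₃.le) (pow_nonneg (mul_nonneg (by linarith) hφ₃'.le) 3)]
      have e1 : ((φ₁ + φ₃') * sA' * sB' * φ₃ ^ 2) ^ 2
          = (φ₁ + φ₃') ^ 3 * (φ₂ + φ₃') * φ₃ ^ 4 := by
        rw [mul_pow, mul_pow, mul_pow, hA', hB']; ring
      have e2 : ((φ₁ + φ₃) * sA * sB * φ₃' ^ 2) ^ 2
          = (φ₁ + φ₃) ^ 3 * (φ₂ + φ₃) * φ₃' ^ 4 := by
        rw [mul_pow, mul_pow, mul_pow, hA, hB]; ring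
      have hsq : ((φ₁ + φ₃') * sA' * sB' * φ₃ ^ 2) ^ 2
          ≤ ((φ₁ + φ₃) * sA * sB * φ₃' ^ 2) ^ 2 := by rw [e1, e2]; exact hq
      have hrnn : (0:ℝ) ≤ (φ₁ + φ₃) * sA * sB * φ₃' ^ 2 :=
        mul_nonneg (mul_nonneg (mul_nonneg (by linarith) (Real.sqrt_nonneg _))
          (Real.sqrt_nonneg _)) (sq_nonneg _)
      exact le_of_pow_le_pow_left₀ two_ne_zero hrnn hsq
    rw [div_le_div_iff₀ (mul_pos (pow_pos hφ₃' 2) (by linarith))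
      (mul_pos (pow_pos hφ₃ 2) (by linarith))]
    nlinarith [mul_le_mul_of_nonneg_left (add_le_add p1 p2) (by linarith : (0:ℝ) ≤ 2 * (φ₂ - φ₁))]
end

section
/- Let κ > 0 and let φ₁, φ₃, φ₄ be reals with φ₁ ≥ 4κ, φ₃ ≥ 4κ and 0 ≤ φ₄ ≤ κ. Then √(φ₃·(φ₁ + φ₃ + φ₄)) > φ₃ + φ₄, and ( (√(φ₁ + φ₃ + φ₄) − √φ₃)² + φ₁ + φ₄ ) / ( √(φ₃·(φ₁ + φ₃ + φ₄)) − φ₃ − φ₄ )² ≤ 6/κ. -/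
set_option maxHeartbeats 1000000 in
private lemma w2_aux (b t f k : ℝ) (hb0 : 0 ≤ b) (ht : 0 ≤ t) (hf0 : 0 ≤ f)
    (hfk : f ≤ k) (hk0 : 0 < k) (hk1 : 4 * k ≤ (2 * b + t) * t - f) (hk3 : 4 * k ≤ b ^ 2)
    (hd : f < b * t) : 2 * (b + t) * t * k ≤ 6 * (b * t - f) ^ 2 := by
  have hbpos : 0 < b := by nlinarith
  rcases le_total ((2 * b + t) * t - f) (b ^ 2) with hc | hc
  · -- use 4k ≤ (2b+t)t - f
    have step1 : 2 * (b + t) * t * k ≤ (b + t) * t * ((2 * b + t) * t - f) / 2 := by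
      nlinarith [mul_nonneg (mul_nonneg (by linarith : (0:ℝ) ≤ b + t) ht)
        (by linarith : (0:ℝ) ≤ (2 * b + t) * t - f - 4 * k)]
    have h5 : 2 * t ≤ b := by
      by_contra h
      push_neg at h
      nlinarith [mul_pos (by linarith : (0:ℝ) < 2 * t - b) (by linarith : (0:ℝ) < 2 * t + b),
        mul_pos (by linarith : (0:ℝ) < 2 * t - b) hbpos]
    have hA : 0 ≤ (2 * b + t) * t - 5 * f := by linarith
    have hB : 0 ≤ 91 * (b * t) - 17 * t ^ 2 - 60 * f := by
      nlinarith [mul_nonneg (by linarith : (0:ℝ) ≤ b - 2 * t) ht]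
    have hC : 0 ≤ 17 * b ^ 2 - 33 * (b * t) - 2 * t ^ 2 := by
      nlinarith [mul_nonneg (by linarith : (0:ℝ) ≤ b - 2 * t)
        (by linarith : (0:ℝ) ≤ 17 * b + t)]
    have key1 : (b + t) * t * ((2 * b + t) * t - f) ≤ 12 * (b * t - f) ^ 2 := by
      nlinarith [mul_nonneg hA hB, mul_nonneg hC (mul_nonneg ht ht)]
    linarith
  · -- use 4k ≤ b²
    have step1 : 2 * (b + t) * t * k ≤ (b + t) * t * b ^ 2 / 2 := by
      nlinarith [mul_nonneg (mul_nonneg (by linarith : (0:ℝ) ≤ b + t) ht)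
        (by linarith : (0:ℝ) ≤ b ^ 2 - 4 * k)]
    have hf4 : 4 * f ≤ b ^ 2 := by linarith
    have key2 : (b + t) * t * b ^ 2 ≤ 12 * (b * t - f) ^ 2 := by
      rcases le_total b (2 * t) with hc2 | hc2
      · have h1 : 0 ≤ b * t - b ^ 2 / 4 := by
          nlinarith [mul_nonneg (by linarith : (0:ℝ) ≤ 2 * t - b) hb0]
        have h3 : (b + t) * t * b ^ 2 ≤ 12 * (b * t - b ^ 2 / 4) ^ 2 := by
          nlinarith [mul_nonneg (mul_nonneg (by linarith : (0:ℝ) ≤ 2 * t - b)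
            (mul_nonneg hb0 hb0)) (by linarith : (0:ℝ) ≤ 11 * t - 3 / 2 * b)]
        have h4 : (b * t - b ^ 2 / 4) ^ 2 ≤ (b * t - f) ^ 2 := by
          nlinarith [mul_nonneg h1 (by linarith : (0:ℝ) ≤ b ^ 2 / 4 - f)]
        linarith
      · have hfu : f ≤ t ^ 2 + 2 * b * t - b ^ 2 := by nlinarith
        have hu : b * t + t ^ 2 ≤ 3 / 4 * b ^ 2 := by
          nlinarith [mul_nonneg (by linarith : (0:ℝ) ≤ b - 2 * t) ht,
            mul_nonneg (by linarith : (0:ℝ) ≤ b - 2 * t) hb0]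
        have h1 : 0 ≤ b ^ 2 - (b * t + t ^ 2) := by linarith
        have h2 : b ^ 2 - (b * t + t ^ 2) ≤ b * t - f := by linarith
        have h3 : (b + t) * t * b ^ 2 ≤ 12 * (b ^ 2 - (b * t + t ^ 2)) ^ 2 := by
          nlinarith [mul_nonneg (by linarith : (0:ℝ) ≤ 3 * b ^ 2 - 4 * (b * t + t ^ 2))
            (by linarith : (0:ℝ) ≤ 4 * b ^ 2 - 3 * (b * t + t ^ 2))]
        have h4 : (b ^ 2 - (b * t + t ^ 2)) ^ 2 ≤ (b * t - f) ^ 2 := by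
          nlinarith [mul_nonneg h1 (by linarith : (0:ℝ) ≤ (b * t - f) - (b ^ 2 - (b * t + t ^ 2)))]
        linarith
    linarith

/-- Let `κ > 0`, `φ₁ ≥ 4κ`, `φ₃ ≥ 4κ` and `0 ≤ φ₄ ≤ κ`.  Then
`√(φ₃(φ₁+φ₃+φ₄)) > φ₃ + φ₄` and
`((√(φ₁+φ₃+φ₄) - √φ₃)² + φ₁ + φ₄)/(√(φ₃(φ₁+φ₃+φ₄)) - φ₃ - φ₄)² ≤ 6/κ`. -/
theorem w2_bound (κ φ₁ φ₃ φ₄ : ℝ) (hκ : 0 < κ) (hφ₁ : 4 * κ ≤ φ₁) (hφ₃ : 4 * κ ≤ φ₃)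
    (hφ₄0 : 0 ≤ φ₄) (hφ₄ : φ₄ ≤ κ) :
    φ₃ + φ₄ < Real.sqrt (φ₃ * (φ₁ + φ₃ + φ₄)) ∧
    ((Real.sqrt (φ₁ + φ₃ + φ₄) - Real.sqrt φ₃) ^ 2 + φ₁ + φ₄) /
        (Real.sqrt (φ₃ * (φ₁ + φ₃ + φ₄)) - φ₃ - φ₄) ^ 2 ≤ 6 / κ := by
  have hφ₃0 : (0:ℝ) < φ₃ := by linarith
  have hs0 : (0:ℝ) ≤ φ₁ + φ₃ + φ₄ := by linarith
  set a := Real.sqrt (φ₁ + φ₃ + φ₄) with ha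
  set b := Real.sqrt φ₃ with hb
  have ha2 : a ^ 2 = φ₁ + φ₃ + φ₄ := Real.sq_sqrt hs0
  have hb2 : b ^ 2 = φ₃ := Real.sq_sqrt hφ₃0.le
  have ha0 : 0 ≤ a := Real.sqrt_nonneg _
  have hb0 : 0 ≤ b := Real.sqrt_nonneg _
  have hmul : Real.sqrt (φ₃ * (φ₁ + φ₃ + φ₄)) = b * a := Real.sqrt_mul hφ₃0.le _
  have hab : b ≤ a := by
    apply Real.sqrt_le_sqrt; linarith
  have hsq : (φ₃ + φ₄) ^ 2 < φ₃ * (φ₁ + φ₃ + φ₄) := by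
    nlinarith [mul_pos hκ hφ₃0, mul_nonneg (sub_nonneg.2 hφ₁) hφ₃0.le,
      mul_nonneg (sub_nonneg.2 hφ₄) hφ₃0.le, mul_nonneg hφ₄0 (sub_nonneg.2 hφ₄),
      mul_nonneg hκ.le (sub_nonneg.2 hφ₃)]
  have hD : φ₃ + φ₄ < b * a := by
    rw [← hmul]
    exact (Real.lt_sqrt (by positivity)).2 hsq
  refine ⟨by rw [hmul]; exact hD, ?_⟩
  rw [hmul]
  have hDpos : 0 < (b * a - φ₃ - φ₄) ^ 2 := by
    have : 0 < b * a - φ₃ - φ₄ := by linarith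
    positivity
  rw [div_le_div_iff₀ hDpos hκ]
  have E1 : (a - b) ^ 2 + φ₁ + φ₄ = 2 * (b + (a - b)) * (a - b) := by
    linear_combination hb2 - ha2
  have E2 : b * a - φ₃ - φ₄ = b * (a - b) - φ₄ := by linear_combination hb2
  rw [E1, E2]
  apply w2_aux b (a - b) φ₄ κ hb0 (by linarith) hφ₄0 hφ₄ hκ
  · have h : (2 * b + (a - b)) * (a - b) - φ₄ = φ₁ := by linear_combination ha2 - hb2
    linarith
  · linarith [hb2]
  · nlinarith [hD, hb2]
end

section
/- Define w₂(φ₁, φ₃, φ₄) := ( (√(φ₁ + φ₃ + φ₄) − √φ₃)² + φ₁ + φ₄ ) / ( √(φ₃·(φ₁ + φ₃ + φ₄)) − φ₃ − φ₄ )² for reals φ₁ ≥ 0, φ₃ > 0, φ₄ ≥ 0 satisfying D(φ₁, φ₃, φ₄) := √(φ₃·(φ₁ + φ₃ + φ₄)) − φ₃ − φ₄ > 0. Then: (i) if φ₁ ≤ φ₁′ and D(φ₁, φ₃, φ₄) > 0, then w₂(φ₁′, φ₃, φ₄) ≤ w₂(φ₁, φ₃, φ₄); (ii) if 0 < φ₃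 ≤ φ₃′ and D(φ₁, φ₃, φ₄) > 0, then w₂(φ₁, φ₃′, φ₄) ≤ w₂(φ₁, φ₃, φ₄); (iii) if 0 ≤ φ₄ ≤ φ₄′ and D(φ₁, φ₃, φ₄′) > 0, then w₂(φ₁, φ₃, φ₄) ≤ w₂(φ₁, φ₃, φ₄′). -/
set_option maxHeartbeats 1000000

/-- `D(φ₁, φ₃, φ₄) = √(φ₃(φ₁+φ₃+φ₄)) - φ₃ - φ₄`. -/
noncomputable def D (φ₁ φ₃ φ₄ : ℝ) : ℝ :=
  Real.sqrt (φ₃ * (φ₁ + φ₃ + φ₄)) - φ₃ - φ₄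

/-- `w₂(φ₁, φ₃, φ₄) = ((√(φ₁+φ₃+φ₄) - √φ₃)² + φ₁ + φ₄)/D(φ₁, φ₃, φ₄)²`. -/
noncomputable def w2 (φ₁ φ₃ φ₄ : ℝ) : ℝ :=
  ((Real.sqrt (φ₁ + φ₃ + φ₄) - Real.sqrt φ₃) ^ 2 + φ₁ + φ₄) / (D φ₁ φ₃ φ₄) ^ 2

private lemma f_mono {p t t' : ℝ} (ht' : 0 ≤ t') (h : t' ≤ t) (hp : t < p) :
    2 * t' / (p - t') ^ 2 ≤ 2 * t / (p - t) ^ 2 := by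
  have h1 : 0 < p - t := by linarith
  have h2 : 0 < p - t' := by linarith
  rw [div_le_div_iff₀ (by positivity) (by positivity)]
  nlinarith [mul_nonneg (sub_nonneg.2 h) (show (0:ℝ) ≤ p^2 - t*t' by nlinarith)]

private lemma D_eq' (φ₁ φ₃ φ₄ : ℝ) (h1 : 0 ≤ φ₁) (h3 : 0 < φ₃) (h4 : 0 ≤ φ₄) :
    D φ₁ φ₃ φ₄ = φ₁ - Real.sqrt (φ₁+φ₃+φ₄) * (Real.sqrt (φ₁+φ₃+φ₄) - Real.sqrt φ₃) := by
  unfold D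
  rw [Real.sqrt_mul h3.le]
  linear_combination Real.sq_sqrt (show (0:ℝ) ≤ φ₁+φ₃+φ₄ by linarith)

private lemma w2_eq' (φ₁ φ₃ φ₄ : ℝ) (h1 : 0 ≤ φ₁) (h3 : 0 < φ₃) (h4 : 0 ≤ φ₄) :
    w2 φ₁ φ₃ φ₄ = 2 * (Real.sqrt (φ₁+φ₃+φ₄) * (Real.sqrt (φ₁+φ₃+φ₄) - Real.sqrt φ₃)) /
      (φ₁ - Real.sqrt (φ₁+φ₃+φ₄) * (Real.sqrt (φ₁+φ₃+φ₄) - Real.sqrt φ₃)) ^ 2 := by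
  have hnum : (Real.sqrt (φ₁+φ₃+φ₄) - Real.sqrt φ₃)^2 + φ₁ + φ₄
      = 2 * (Real.sqrt (φ₁+φ₃+φ₄) * (Real.sqrt (φ₁+φ₃+φ₄) - Real.sqrt φ₃)) := by
    linear_combination Real.sq_sqrt h3.le - Real.sq_sqrt (show (0:ℝ) ≤ φ₁+φ₃+φ₄ by linarith)
  unfold w2
  rw [D_eq' φ₁ φ₃ φ₄ h1 h3 h4, hnum]

private lemma w2_eqE (φ₁ φ₃ φ₄ : ℝ) (h1 : 0 ≤ φ₁) (h3 : 0 < φ₃) (h4 : 0 ≤ φ₄) :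
    w2 φ₁ φ₃ φ₄ = 2 * (Real.sqrt (φ₁+φ₃+φ₄) * (Real.sqrt (φ₁+φ₃+φ₄) - Real.sqrt φ₃)) /
      (Real.sqrt φ₃ * Real.sqrt (φ₁+φ₃+φ₄) - φ₃ - φ₄) ^ 2 := by
  have hnum : (Real.sqrt (φ₁+φ₃+φ₄) - Real.sqrt φ₃)^2 + φ₁ + φ₄
      = 2 * (Real.sqrt (φ₁+φ₃+φ₄) * (Real.sqrt (φ₁+φ₃+φ₄) - Real.sqrt φ₃)) := by
    linear_combination Real.sq_sqrt h3.le - Real.sq_sqrt (show (0:ℝ) ≤ φ₁+φ₃+φ₄ by linarith)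
  unfold w2 D
  rw [Real.sqrt_mul h3.le, hnum]

/-- On the domain `φ₁ ≥ 0`, `φ₃ > 0`, `φ₄ ≥ 0`, `D(φ₁, φ₃, φ₄) > 0`, the quantity `w₂`
is nonincreasing in each of `φ₁` and `φ₃`, and nondecreasing in `φ₄`. -/
theorem w2_monotone :
    (∀ φ₁ φ₁' φ₃ φ₄ : ℝ, 0 ≤ φ₁ → 0 < φ₃ → 0 ≤ φ₄ → φ₁ ≤ φ₁' → 0 < D φ₁ φ₃ φ₄ →
      w2 φ₁' φ₃ φ₄ ≤ w2 φ₁ φ₃ φ₄) ∧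
    (∀ φ₁ φ₃ φ₃' φ₄ : ℝ, 0 ≤ φ₁ → 0 < φ₃ → 0 ≤ φ₄ → φ₃ ≤ φ₃' → 0 < D φ₁ φ₃ φ₄ →
      w2 φ₁ φ₃' φ₄ ≤ w2 φ₁ φ₃ φ₄) ∧
    (∀ φ₁ φ₃ φ₄ φ₄' : ℝ, 0 ≤ φ₁ → 0 < φ₃ → 0 ≤ φ₄ → φ₄ ≤ φ₄' → 0 < D φ₁ φ₃ φ₄' →
      w2 φ₁ φ₃ φ₄ ≤ w2 φ₁ φ₃ φ₄') := by
  refine ⟨?_, ?_, ?_⟩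
  · -- (i) nonincreasing in φ₁
    intro φ₁ φ₁' φ₃ φ₄ h1 h3 h4 h11 hD0
    have h1' : 0 ≤ φ₁' := h1.trans h11
    rw [w2_eqE φ₁ φ₃ φ₄ h1 h3 h4, w2_eqE φ₁' φ₃ φ₄ h1' h3 h4]
    unfold D at hD0
    rw [Real.sqrt_mul h3.le] at hD0
    have hb2 : (Real.sqrt φ₃)^2 = φ₃ := Real.sq_sqrt h3.le
    have hb0 : 0 < Real.sqrt φ₃ := Real.sqrt_pos.2 h3
    have hba : Real.sqrt φ₃ ≤ Real.sqrt (φ₁+φ₃+φ₄) := Real.sqrt_le_sqrt (by linarith)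
    have haa' : Real.sqrt (φ₁+φ₃+φ₄) ≤ Real.sqrt (φ₁'+φ₃+φ₄) := Real.sqrt_le_sqrt (by linarith)
    set a := Real.sqrt (φ₁+φ₃+φ₄) with ha_def
    set a' := Real.sqrt (φ₁'+φ₃+φ₄) with ha'_def
    set b := Real.sqrt φ₃ with hb_def
    -- hD0 : 0 < b * a - φ₃ - φ₄
    have hE : 0 < b * a - φ₃ - φ₄ := hD0
    have hE' : b * a - φ₃ - φ₄ ≤ b * a' - φ₃ - φ₄ := by nlinarith
    have hE'0 : 0 < b * a' - φ₃ - φ₄ := lt_of_lt_of_le hE hE'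
    rw [div_le_div_iff₀ (by positivity) (by positivity)]
    -- key factorization in u = a*b, u' = a'*b, B = b², q = φ₄, e = E, d = u'-u
    have key : 0 ≤ (a*b*(a*b - b^2)) * (b*a' - φ₃ - φ₄)^2
        - (a'*b*(a'*b - b^2)) * (b*a - φ₃ - φ₄)^2 := by
      rw [← hb2] at hE hE'0 ⊢
      have hident : (a*b*(a*b - b^2)) * (b*a' - b^2 - φ₄)^2
          - (a'*b*(a'*b - b^2)) * (b*a - b^2 - φ₄)^2
          = (a'*b - a*b) * ((a'*b - a*b) * (b^2*φ₄ + b^2*(a*b - b^2 - φ₄) + φ₄^2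
              + 2*φ₄*(a*b - b^2 - φ₄))
            + (a*b - b^2 - φ₄) * (2*b^2*φ₄ + b^2*(a*b - b^2 - φ₄) + 2*φ₄^2
              + 2*φ₄*(a*b - b^2 - φ₄))) := by ring
      rw [hident]
      have hd : 0 ≤ a'*b - a*b := by nlinarith
      have he : 0 ≤ a*b - b^2 - φ₄ := by linarith
      have hB : 0 ≤ b^2 := sq_nonneg b
      have hq2 : 0 ≤ φ₄^2 := sq_nonneg φ₄
      have m1 := mul_nonneg hB h4
      have m2 := mul_nonneg hB he
      have m3 := mul_nonneg h4 he
      have t1 : 0 ≤ b^2*φ₄ + b^2*(a*b - b^2 - φ₄) + φ₄^2 + 2*φ₄*(a*b - b^2 - φ₄) := by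
        linarith
      have t2 : 0 ≤ 2*b^2*φ₄ + b^2*(a*b - b^2 - φ₄) + 2*φ₄^2 + 2*φ₄*(a*b - b^2 - φ₄) := by
        linarith
      exact mul_nonneg hd (add_nonneg (mul_nonneg hd t1) (mul_nonneg he t2))
    have hb2pos : (0:ℝ) < b^2 := by positivity
    refine le_of_mul_le_mul_left ?_ hb2pos
    have e1 : b^2 * (2*(a'*(a'-b)) * (b*a - φ₃ - φ₄)^2)
        = 2*((a'*b*(a'*b - b^2)) * (b*a - φ₃ - φ₄)^2) := by ring
    have e2 : b^2 * (2*(a*(a-b)) * (b*a' - φ₃ - φ₄)^2)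
        = 2*((a*b*(a*b - b^2)) * (b*a' - φ₃ - φ₄)^2) := by ring
    rw [e1, e2]
    linarith [key]
  · -- (ii) nonincreasing in φ₃
    intro φ₁ φ₃ φ₃' φ₄ h1 h3 h4 h33 hD0
    have h3' : 0 < φ₃' := lt_of_lt_of_le h3 h33
    rw [w2_eq' φ₁ φ₃ φ₄ h1 h3 h4, w2_eq' φ₁ φ₃' φ₄ h1 h3' h4]
    rw [D_eq' φ₁ φ₃ φ₄ h1 h3 h4] at hD0
    have ha2 : (Real.sqrt (φ₁+φ₃+φ₄))^2 = φ₁+φ₃+φ₄ := Real.sq_sqrt (by linarith)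
    have ha2' : (Real.sqrt (φ₁+φ₃'+φ₄))^2 = φ₁+φ₃'+φ₄ := Real.sq_sqrt (by linarith)
    have hb2 : (Real.sqrt φ₃)^2 = φ₃ := Real.sq_sqrt h3.le
    have hb2' : (Real.sqrt φ₃')^2 = φ₃' := Real.sq_sqrt h3'.le
    have hb0 : 0 < Real.sqrt φ₃ := Real.sqrt_pos.2 h3
    have hbb' : Real.sqrt φ₃ ≤ Real.sqrt φ₃' := Real.sqrt_le_sqrt h33
    have hba : Real.sqrt φ₃ ≤ Real.sqrt (φ₁+φ₃+φ₄) := Real.sqrt_le_sqrt (by linarith)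
    have hb'a' : Real.sqrt φ₃' ≤ Real.sqrt (φ₁+φ₃'+φ₄) := Real.sqrt_le_sqrt (by linarith)
    set a := Real.sqrt (φ₁+φ₃+φ₄) with ha_def
    set a' := Real.sqrt (φ₁+φ₃'+φ₄) with ha'_def
    set b := Real.sqrt φ₃ with hb_def
    set b' := Real.sqrt φ₃' with hb'_def
    have hC : a'^2 - b'^2 = a^2 - b^2 := by rw [ha2, ha2', hb2, hb2']; ring
    have hb'0 : 0 < b' := lt_of_lt_of_le hb0 hbb'
    have ha0 : 0 < a := lt_of_lt_of_le hb0 hba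
    have ha'0 : 0 < a' := lt_of_lt_of_le hb'0 hb'a'
    have ht0' : 0 ≤ a' * (a' - b') := mul_nonneg ha'0.le (by linarith)
    have htp : a * (a - b) < φ₁ := by linarith
    have hG : a' * (a' - b') ≤ a * (a - b) := by
      have hpos1 : 0 < a'*b' + a*b := by positivity
      have h5 : b*b' ≤ a*a' :=
        mul_le_mul hba hb'a' hb'0.le ha0.le
      have hid : (a'^2 - a'*b' + b^2 - a*b) * ((a+b)*(a'+b'))
          = (a^2 - b^2) * (a*a' - b*b') := by linear_combination (a'*(a+b)) * hC
      have hH : 0 ≤ a'^2 - a'*b' + b^2 - a*b := by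
        have hrhs : 0 ≤ (a^2 - b^2) * (a*a' - b*b') :=
          mul_nonneg (by nlinarith) (by linarith)
        have hP : 0 < (a+b)*(a'+b') := by positivity
        nlinarith [hid, hrhs, hP]
      have hid2 : (a*(a-b) - a'*(a'-b')) * (a'*b' + a*b)
          = (b'^2 - b^2) * (a'^2 - a'*b' + b^2 - a*b) := by
        linear_combination (b^2 - a*b - a'*b') * hC
      have hbs : 0 ≤ b'^2 - b^2 := by nlinarith
      nlinarith [hid2, mul_nonneg hbs hH, hpos1]
    exact f_mono ht0' hG htp
  · -- (iii) nondecreasing in φ₄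
    intro φ₁ φ₃ φ₄ φ₄' h1 h3 h4 h44 hD0'
    have h4' : 0 ≤ φ₄' := h4.trans h44
    rw [w2_eq' φ₁ φ₃ φ₄ h1 h3 h4, w2_eq' φ₁ φ₃ φ₄' h1 h3 h4']
    rw [D_eq' φ₁ φ₃ φ₄' h1 h3 h4'] at hD0'
    have hb0 : 0 < Real.sqrt φ₃ := Real.sqrt_pos.2 h3
    have hba : Real.sqrt φ₃ ≤ Real.sqrt (φ₁+φ₃+φ₄) := Real.sqrt_le_sqrt (by linarith)
    have haa' : Real.sqrt (φ₁+φ₃+φ₄) ≤ Real.sqrt (φ₁+φ₃+φ₄') := Real.sqrt_le_sqrt (by linarith)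
    set a := Real.sqrt (φ₁+φ₃+φ₄) with ha_def
    set a' := Real.sqrt (φ₁+φ₃+φ₄') with ha'_def
    set b := Real.sqrt φ₃ with hb_def
    have ha0 : 0 < a := lt_of_lt_of_le hb0 hba
    have ht0 : 0 ≤ a * (a - b) := mul_nonneg ha0.le (by linarith)
    have htt' : a * (a - b) ≤ a' * (a' - b) := by nlinarith
    have ht'p : a' * (a' - b) < φ₁ := by linarith
    exact f_mono ht0 htt' ht'p
end

section
/- For every p ∈ ℕ with p ≥ 1 and every nonzero θ ∈ ℝ^p, there exists s ∈ {2⁰, 2¹, …, 2^{⌊log₂ p⌋}} such that the set {j ∈ {1,…,p} : |θ^j| ≥ ‖θ‖₂ / √(s·log₂(2p))} has cardinality at least s. In particular, the effective sparsity s(θ) is well defined. -/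
open Finset

/-- For every `p ≥ 1` and nonzero `θ ∈ ℝ^p`, there exists
`s ∈ {2⁰, 2¹, …, 2^⌊log₂ p⌋}` (i.e. `s = 2^i` with `i ≤ Nat.log 2 p`) such that
`#{j : |θ^j| ≥ ‖θ‖₂/√(s log₂(2p))} ≥ s`; hence the effective sparsity is well defined. -/
theorem effective_sparsity_exists (p : ℕ) (hp : 1 ≤ p) (θ : Fin p → ℝ) (hθ : θ ≠ 0) :
    ∃ i : ℕ, i ≤ Nat.log 2 p ∧
      2 ^ i ≤ (Finset.univ.filter (fun j : Fin p =>
        Real.sqrt (∑ k, θ k ^ 2) / Real.sqrt ((2 : ℝ) ^ i * Real.logb 2 (2 * p))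
          ≤ |θ j|)).card := by
  by_contra hcon
  push_neg at hcon
  set K := Nat.log 2 p with hKdef
  set L := Real.logb 2 (2 * p) with hLdef
  set T := ∑ k, θ k ^ 2 with hTdef
  obtain ⟨k0, hk0⟩ := Function.ne_iff.mp hθ
  have hk0' : θ k0 ≠ 0 := by simpa using hk0
  have hT : 0 < T :=
    Finset.sum_pos' (fun i _ => sq_nonneg _) ⟨k0, mem_univ _, by positivity⟩
  have h2K : (2:ℕ) ^ K ≤ p := Nat.pow_log_le_self 2 (by omega)
  have hpK : p < 2 ^ (K + 1) := Nat.lt_pow_succ_log_self (by norm_num) p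
  have h2Kr : (2:ℝ) ^ K ≤ p := by exact_mod_cast h2K
  have hpKr : (p:ℝ) < 2 ^ (K + 1) := by exact_mod_cast hpK
  have hL : (K:ℝ) + 1 ≤ L := by
    have h1 : ((2:ℝ)) ^ (K + 1) ≤ 2 * p := by
      rw [pow_succ]
      linarith [h2Kr]
    calc (K:ℝ) + 1 = Real.logb 2 ((2:ℝ) ^ (K + 1)) := by
          rw [Real.logb_pow, Real.logb_self_eq_one (by norm_num)]
          push_cast; ring
      _ ≤ L := by
          apply Real.logb_le_logb_of_le (by norm_num) ?_ h1
          positivity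
  have hL0 : 0 < L := lt_of_lt_of_le (by positivity) hL
  set c := T / L with hcdef
  have hc : 0 < c := by positivity
  set A : ℕ → Finset (Fin p) := fun i => univ.filter (fun j : Fin p =>
      Real.sqrt T / Real.sqrt ((2:ℝ) ^ i * L) ≤ |θ j|) with hAdef
  -- every level set is too small
  have hcard : ∀ i ≤ K, (A i).card < 2 ^ i := fun i hi => hcon i hi
  -- threshold squared
  have hthr : ∀ i : ℕ, (Real.sqrt T / Real.sqrt ((2:ℝ) ^ i * L)) ^ 2 = c * (1/2 : ℝ) ^ i := by
    intro i
    rw [div_pow, Real.sq_sqrt hT.le, Real.sq_sqrt (by positivity)]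
    have h2i : ((2:ℝ) ^ i) ≠ 0 := by positivity
    have hLne : L ≠ 0 := hL0.ne'
    rw [hcdef, one_div, inv_pow, ← div_eq_mul_inv, div_div, mul_comm L ((2:ℝ) ^ i)]
  -- outside A i, squares are small
  have hnotin : ∀ (i : ℕ) (j : Fin p), j ∉ A i → θ j ^ 2 < c * (1/2 : ℝ) ^ i := by
    intro i j hj
    simp only [hAdef, mem_filter, mem_univ, true_and, not_le] at hj
    have h0 : |θ j| < Real.sqrt T / Real.sqrt ((2:ℝ) ^ i * L) := hj
    have h1 : |θ j| ^ 2 < (Real.sqrt T / Real.sqrt ((2:ℝ) ^ i * L)) ^ 2 :=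
      pow_lt_pow_left₀ h0 (abs_nonneg _) two_ne_zero
    rw [hthr i] at h1
    calc θ j ^ 2 = |θ j| ^ 2 := (sq_abs _).symm
      _ < c * (1/2:ℝ) ^ i := h1
  -- monotonicity of levels
  have hmono : ∀ i i' : ℕ, i ≤ i' → A i ⊆ A i' := by
    intro i i' hii j hj
    simp only [hAdef, mem_filter, mem_univ, true_and] at hj ⊢
    refine le_trans ?_ hj
    apply div_le_div_of_nonneg_left (Real.sqrt_nonneg T) (by positivity)
    exact Real.sqrt_le_sqrt (by
      have : (2:ℝ) ^ i ≤ 2 ^ i' := pow_le_pow_right₀ (by norm_num) hii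
      nlinarith)
  -- A 0 is empty
  have hA0 : A 0 = ∅ := by
    have h0 := hcard 0 (Nat.zero_le K)
    simp only [pow_zero, Nat.lt_one_iff, Finset.card_eq_zero] at h0
    exact h0
  -- pointwise bound
  have hpoint : ∀ j : Fin p, θ j ^ 2 <
      c * (1/2:ℝ) ^ K + ∑ i ∈ Icc 1 K, (if j ∈ A i then c * (1/2:ℝ) ^ i else 0) := by
    intro j
    have hsnn : (0:ℝ) ≤ ∑ i ∈ Icc 1 K, (if j ∈ A i then c * (1/2:ℝ) ^ i else 0) := by
      apply Finset.sum_nonneg; intro i _; positivity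
    by_cases hjK : j ∈ A K
    · -- find smallest level containing j
      have hex : ∃ m, j ∈ A m := ⟨K, hjK⟩
      classical
      set m := Nat.find hex with hmdef
      have hmem : j ∈ A m := Nat.find_spec hex
      have hmK : m ≤ K := Nat.find_le hjK
      have hm0 : m ≠ 0 := by
        intro h0
        rw [h0] at hmem
        simp [hA0] at hmem
      have hm1 : 1 ≤ m := Nat.one_le_iff_ne_zero.mpr hm0
      have hnot : j ∉ A (m - 1) := Nat.find_min hex (by omega)
      have hlt : θ j ^ 2 < c * (1/2:ℝ) ^ (m - 1) := hnotin (m - 1) j hnot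
      -- lower bound the sum
      have hsub : Icc m K ⊆ Icc 1 K := Icc_subset_Icc hm1 le_rfl
      have hsum1 : ∑ i ∈ Icc m K, c * (1/2:ℝ) ^ i
          ≤ ∑ i ∈ Icc 1 K, (if j ∈ A i then c * (1/2:ℝ) ^ i else 0) := by
        calc ∑ i ∈ Icc m K, c * (1/2:ℝ) ^ i
            = ∑ i ∈ Icc m K, (if j ∈ A i then c * (1/2:ℝ) ^ i else 0) := by
              apply Finset.sum_congr rfl
              intro i hi
              rw [if_pos (hmono m i (mem_Icc.mp hi).1 hmem)]
          _ ≤ _ := Finset.sum_le_sum_of_subset_of_nonneg hsub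
              (fun i _ _ => by positivity)
      have hgeo : ∑ i ∈ Icc m K, c * (1/2:ℝ) ^ i
          = c * (1/2:ℝ) ^ (m - 1) - c * (1/2:ℝ) ^ K := by
        rw [← Finset.mul_sum]
        have : Icc m K = Ico m (K + 1) := rfl
        rw [this, geom_sum_Ico (by norm_num : (1/2:ℝ) ≠ 1) (by omega)]
        have hm' : m - 1 + 1 = m := by omega
        have : ((1/2:ℝ)) ^ m = (1/2) * (1/2) ^ (m - 1) := by
          rw [← pow_succ']
          congr 1
          omega
        rw [pow_succ, this]
        ring
      linarith
    · have := hnotin K j hjK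
      linarith
  -- sum up
  have hsum : T < (p : ℝ) * (c * (1/2:ℝ) ^ K) + ∑ i ∈ Icc 1 K, ((A i).card : ℝ) * (c * (1/2:ℝ) ^ i) := by
    have h1 : T < ∑ j : Fin p,
        (c * (1/2:ℝ) ^ K + ∑ i ∈ Icc 1 K, (if j ∈ A i then c * (1/2:ℝ) ^ i else 0)) := by
      rw [hTdef]
      exact Finset.sum_lt_sum_of_nonempty (univ_nonempty_iff.mpr ⟨⟨0, hp⟩⟩)
        (fun j _ => hpoint j)
    have h2 : ∑ j : Fin p,
        (c * (1/2:ℝ) ^ K + ∑ i ∈ Icc 1 K, (if j ∈ A i then c * (1/2:ℝ) ^ i else 0))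
        = (p : ℝ) * (c * (1/2:ℝ) ^ K) + ∑ i ∈ Icc 1 K, ((A i).card : ℝ) * (c * (1/2:ℝ) ^ i) := by
      rw [Finset.sum_add_distrib, Finset.sum_const, Finset.card_univ, Fintype.card_fin,
        nsmul_eq_mul, Finset.sum_comm]
      congr 1
      apply Finset.sum_congr rfl
      intro i _
      rw [Finset.sum_ite_mem, Finset.univ_inter, Finset.sum_const, nsmul_eq_mul]
    linarith
  -- bound the card sum
  have hcsum : ∑ i ∈ Icc 1 K, ((A i).card : ℝ) * (c * (1/2:ℝ) ^ i)
      ≤ ∑ i ∈ Icc 1 K, ((2:ℝ) ^ i - 1) * (c * (1/2:ℝ) ^ i) := by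
    apply Finset.sum_le_sum
    intro i hi
    have hci : (A i).card < 2 ^ i := hcard i (mem_Icc.mp hi).2
    have : ((A i).card : ℝ) ≤ (2:ℝ) ^ i - 1 := by
      have : ((A i).card : ℝ) + 1 ≤ (2:ℝ) ^ i := by exact_mod_cast hci
      linarith
    have hnn : (0:ℝ) ≤ c * (1/2:ℝ) ^ i := by positivity
    nlinarith
  have hgeo2 : ∑ i ∈ Icc 1 K, ((2:ℝ) ^ i - 1) * (c * (1/2:ℝ) ^ i)
      = c * K - c * (1 - (1/2:ℝ) ^ K) := by
    have h1 : ∀ i ∈ Icc 1 K, ((2:ℝ) ^ i - 1) * (c * (1/2:ℝ) ^ i)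
        = c - c * (1/2:ℝ) ^ i := by
      intro i _
      have : (2:ℝ) ^ i * (1/2:ℝ) ^ i = 1 := by
        rw [← mul_pow]; norm_num
      nlinarith
    rw [Finset.sum_congr rfl h1, Finset.sum_sub_distrib, Finset.sum_const,
      Nat.card_Icc, ← Finset.mul_sum]
    have : Icc 1 K = Ico 1 (K + 1) := rfl
    rw [this, geom_sum_Ico (by norm_num : (1/2:ℝ) ≠ 1) (by omega)]
    simp only [nsmul_eq_mul]
    push_cast [Nat.add_sub_cancel]
    rw [pow_succ]
    ring
  -- final contradiction
  have hfinal : (p : ℝ) * (c * (1/2:ℝ) ^ K) + (c * K - c * (1 - (1/2:ℝ) ^ K)) ≤ T := by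
    have hhalf : (1/2:ℝ) ^ K = 1 / 2 ^ K := by
      rw [div_pow]; norm_num
    have h2Kpos : (0:ℝ) < 2 ^ K := by positivity
    have hple : (p:ℝ) + 1 ≤ 2 ^ (K + 1) := by exact_mod_cast hpK
    have hp' : (p : ℝ) * (1/2:ℝ) ^ K ≤ 2 - (1/2:ℝ) ^ K := by
      rw [hhalf, ← sub_nonneg]
      have heq : 2 - 1 / 2 ^ K - (p:ℝ) * (1 / 2 ^ K) = ((2:ℝ) ^ (K+1) - 1 - p) / 2 ^ K := by
        rw [pow_succ]
        field_simp
      rw [heq]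
      apply div_nonneg _ h2Kpos.le
      linarith
    have hKL : c * ((K:ℝ) + 1) ≤ T := by
      rw [hcdef, div_mul_eq_mul_div, div_le_iff₀ hL0]
      exact mul_le_mul_of_nonneg_left hL hT.le
    have h3 : c * ((p:ℝ) * (1/2:ℝ) ^ K) ≤ c * (2 - (1/2:ℝ) ^ K) :=
      mul_le_mul_of_nonneg_left hp' hc.le
    have h4 : (p:ℝ) * (c * (1/2:ℝ) ^ K) = c * ((p:ℝ) * (1/2:ℝ) ^ K) := by ring
    have h5 : c * (2 - (1/2:ℝ) ^ K) = 2 * c - c * (1/2:ℝ) ^ K := by ring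
    have h6 : c * ((K:ℝ) + 1) = c * (K:ℝ) + c := by ring
    have h7 : c * (1 - (1/2:ℝ) ^ K) = c - c * (1/2:ℝ) ^ K := by ring
    linarith
  linarith
end

section
/- Let p ∈ ℕ, let θ ∈ ℝ^p be nonzero, and suppose θ has at most k nonzero coordinates, where k ≥ 1. Then there exists s ∈ {2^i : i ∈ ℕ₀, 2^i ≤ k} such that the set {j ∈ {1,…,p} : |θ^j| ≥ ‖θ‖₂ / √(s·log₂(2p))} has cardinality at least s. Consequently the effective sparsity satisfies s(θ) ≤ k. -/
/-- Let `θ ∈ ℝ^p` be nonzero with at most `k ≥ 1` nonzero coordinates.  Then there exists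
`s = 2^i ≤ k` such that `#{j : |θ^j| ≥ ‖θ‖₂/√(s log₂(2p))} ≥ s`; consequently the
effective sparsity satisfies `s(θ) ≤ k`. -/
theorem effective_sparsity_le_sparsity (p k : ℕ) (hk : 1 ≤ k) (θ : Fin p → ℝ) (hθ : θ ≠ 0)
    (hsparse : (Finset.univ.filter (fun j : Fin p => θ j ≠ 0)).card ≤ k) :
    ∃ i : ℕ, 2 ^ i ≤ k ∧
      2 ^ i ≤ (Finset.univ.filter (fun j : Fin p =>
        Real.sqrt (∑ l, θ l ^ 2) / Real.sqrt ((2 : ℝ) ^ i * Real.logb 2 (2 * p))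
          ≤ |θ j|)).card := by
  by_contra hcon
  push_neg at hcon
  -- basic setup
  have hp : 0 < p := by
    rcases Nat.eq_zero_or_pos p with h | h
    · subst h; exact absurd (funext fun j => j.elim0) hθ
    · exact h
  set Q : ℝ := ∑ l, θ l ^ 2 with hQdef
  obtain ⟨j₀, hj₀⟩ : ∃ j, θ j ≠ 0 := Function.ne_iff.mp hθ
  have hQ : 0 < Q := by
    apply Finset.sum_pos' (fun l _ => sq_nonneg _)
    exact ⟨j₀, Finset.mem_univ _, by positivity⟩
  set L : ℝ := Real.logb 2 (2 * p) with hLdef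
  have hL1 : 1 ≤ L := by
    have h2p : (2 : ℝ) ≤ 2 * p := by
      have : (1:ℝ) ≤ p := by exact_mod_cast hp
      linarith
    have := Real.logb_le_logb_of_le (by norm_num : (1:ℝ) < 2) (by norm_num : (0:ℝ) < 2) h2p
    rwa [Real.logb_self_eq_one (by norm_num)] at this
  have hL0 : 0 < L := by linarith
  set N := Finset.univ.filter (fun j : Fin p => θ j ≠ 0) with hNdef
  set n := N.card with hndef
  have hn1 : 1 ≤ n := Finset.card_pos.mpr ⟨j₀, by simp [hNdef, hj₀]⟩
  have hnp : n ≤ p := by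
    calc n ≤ Finset.univ.card := Finset.card_filter_le _ _
    _ = p := Finset.card_univ.trans (Fintype.card_fin p)
  set m := Nat.log 2 n with hmdef
  have h2m : 2 ^ m ≤ n := Nat.pow_log_le_self 2 (by omega)
  have hn2 : n < 2 ^ (m + 1) := Nat.lt_pow_succ_log_self (by norm_num) n
  set T : ℕ → Finset (Fin p) := fun i => Finset.univ.filter
    (fun j => Real.sqrt Q / Real.sqrt ((2 : ℝ) ^ i * L) ≤ |θ j|) with hTdef
  have hTcard : ∀ i ≤ m, (T i).card < 2 ^ i := by
    intro i hi
    exact hcon i (le_trans (Nat.pow_le_pow_right (by norm_num) hi) (le_trans h2m hsparse))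
  have hTsub : ∀ i, T i ⊆ N := by
    intro i j hj
    simp only [hTdef, Finset.mem_filter] at hj
    have hpos : 0 < Real.sqrt Q / Real.sqrt ((2 : ℝ) ^ i * L) := by positivity
    simp only [hNdef, Finset.mem_filter, Finset.mem_univ, true_and]
    intro h0
    rw [h0, abs_zero] at hj
    linarith
  -- key pointwise bound for j outside T i
  have key1 : ∀ (i : ℕ) (j : Fin p), j ∉ T i → θ j ^ 2 < Q / ((2 : ℝ) ^ i * L) := by
    intro i j hj
    simp only [hTdef, Finset.mem_filter, Finset.mem_univ, true_and, not_le] at hj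
    have hAB : (0:ℝ) < (2 : ℝ) ^ i * L := by positivity
    have h1 : |θ j| ^ 2 < (Real.sqrt Q / Real.sqrt ((2 : ℝ) ^ i * L)) ^ 2 :=
      pow_lt_pow_left₀ hj (abs_nonneg _) (by norm_num)
    rw [div_pow, Real.sq_sqrt hQ.le, Real.sq_sqrt hAB.le, sq_abs] at h1
    exact h1
  -- T 0 is empty
  have hT0 : ∀ j : Fin p, j ∉ T 0 := by
    intro j hj
    have := hTcard 0 (Nat.zero_le m)
    have h1 : 0 < (T 0).card := Finset.card_pos.mpr ⟨j, hj⟩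
    omega
  -- monotonicity of T enters via max over indices below
  set x : ℝ := (2 : ℝ)⁻¹ with hxdef
  have hx1 : x ≠ 1 := by norm_num [hxdef]
  set w : Fin p → ℝ := fun j => x ^ m + ∑ i ∈ Finset.range m,
    (if j ∈ T (i + 1) then x ^ (i + 1) else 0) with hwdef
  -- Claim: pointwise bound
  have claim : ∀ j ∈ N, θ j ^ 2 < Q / L * w j := by
    intro j hjN
    set S := (Finset.range (m + 1)).filter (fun i => j ∉ T i) with hSdef
    have hS0 : 0 ∈ S := by
      simp [hSdef, hT0 j, Nat.succ_le_succ (Nat.zero_le m)]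
    have hSne : S.Nonempty := ⟨0, hS0⟩
    set i₀ := S.max' hSne with hi₀def
    have hi₀S : i₀ ∈ S := S.max'_mem hSne
    have hi₀m : i₀ ≤ m := by
      have := Finset.mem_filter.mp hi₀S
      have := Finset.mem_range.mp this.1
      omega
    have hi₀T : j ∉ T i₀ := (Finset.mem_filter.mp hi₀S).2
    have h1 : θ j ^ 2 < Q / ((2 : ℝ) ^ i₀ * L) := key1 i₀ j hi₀T
    have h2 : Q / ((2 : ℝ) ^ i₀ * L) = Q / L * x ^ i₀ := by
      rw [hxdef, inv_pow, mul_comm ((2:ℝ) ^ i₀) L, ← div_div, div_eq_mul_inv (Q / L)]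
    -- lower bound for w j
    have h3 : x ^ i₀ ≤ w j := by
      have hsub : Finset.Ico i₀ m ⊆ Finset.range m := by
        intro i hi
        exact Finset.mem_range.mpr (Finset.mem_Ico.mp hi).2
      have hmem : ∀ i ∈ Finset.Ico i₀ m, j ∈ T (i + 1) := by
        intro i hi
        obtain ⟨hi1, hi2⟩ := Finset.mem_Ico.mp hi
        by_contra hjT
        have : i + 1 ∈ S := by
          simp only [hSdef, Finset.mem_filter, Finset.mem_range]
          exact ⟨by omega, hjT⟩
        have := Finset.le_max' S (i + 1) this
        omega
      have h4 : ∑ i ∈ Finset.Ico i₀ m, x ^ (i + 1)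
          ≤ ∑ i ∈ Finset.range m, (if j ∈ T (i + 1) then x ^ (i + 1) else 0) := by
        calc ∑ i ∈ Finset.Ico i₀ m, x ^ (i + 1)
            = ∑ i ∈ Finset.Ico i₀ m, (if j ∈ T (i + 1) then x ^ (i + 1) else 0) := by
              apply Finset.sum_congr rfl
              intro i hi
              rw [if_pos (hmem i hi)]
          _ ≤ _ := by
              apply Finset.sum_le_sum_of_subset_of_nonneg hsub
              intro i _ _
              positivity
      have h5 : ∑ i ∈ Finset.Ico i₀ m, x ^ (i + 1) = x ^ i₀ - x ^ m := by
        have : ∑ i ∈ Finset.Ico i₀ m, x ^ (i + 1) = ∑ i ∈ Finset.Ico (i₀ + 1) (m + 1), x ^ i := by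
          rw [Finset.sum_Ico_eq_sum_range, Finset.sum_Ico_eq_sum_range]
          simp [Nat.add_sub_add_right]
          apply Finset.sum_congr rfl
          intro i _
          ring_nf
        rw [this, geom_sum_Ico hx1 (by omega)]
        rw [hxdef]
        field_simp
        ring
      simp only [hwdef]
      rw [h5] at h4
      linarith
    calc θ j ^ 2 < Q / L * x ^ i₀ := by rw [← h2]; exact h1
      _ ≤ Q / L * w j := by
          apply mul_le_mul_of_nonneg_left h3 (by positivity)
  -- sum of w over N
  have hsumw : ∑ j ∈ N, w j ≤ (m : ℝ) + 1 := by
    have hswap : ∑ j ∈ N, ∑ i ∈ Finset.range m, (if j ∈ T (i + 1) then x ^ (i + 1) else 0)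
        = ∑ i ∈ Finset.range m, ((T (i + 1)).card : ℝ) * x ^ (i + 1) := by
      rw [Finset.sum_comm]
      apply Finset.sum_congr rfl
      intro i _
      rw [Finset.sum_ite_mem, Finset.inter_eq_right.mpr (hTsub (i + 1)), Finset.sum_const,
        nsmul_eq_mul]
    have hcardb : ∀ i ∈ Finset.range m, ((T (i + 1)).card : ℝ) * x ^ (i + 1)
        ≤ 1 - x ^ (i + 1) := by
      intro i hi
      have hi' := Finset.mem_range.mp hi
      have hc : (T (i + 1)).card ≤ 2 ^ (i + 1) - 1 := by
        have := hTcard (i + 1) (by omega)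
        omega
      have hc' : ((T (i + 1)).card : ℝ) ≤ (2 : ℝ) ^ (i + 1) - 1 := by
        have h2 : (1:ℕ) ≤ 2 ^ (i+1) := Nat.one_le_two_pow
        calc ((T (i + 1)).card : ℝ) ≤ ((2 ^ (i + 1) - 1 : ℕ) : ℝ) := by exact_mod_cast hc
          _ = (2 : ℝ) ^ (i + 1) - 1 := by
            push_cast [Nat.cast_sub h2]
            ring
      have hxpos : (0:ℝ) < x ^ (i + 1) := by positivity
      have hxe : (2:ℝ) ^ (i+1) * x ^ (i+1) = 1 := by
        rw [hxdef, inv_pow]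
        field_simp
      calc ((T (i + 1)).card : ℝ) * x ^ (i + 1) ≤ ((2 : ℝ) ^ (i + 1) - 1) * x ^ (i + 1) :=
            mul_le_mul_of_nonneg_right hc' hxpos.le
        _ = 1 - x ^ (i + 1) := by rw [sub_mul, hxe]; ring
    have hgeo : ∑ i ∈ Finset.range m, x ^ (i + 1) = 1 - x ^ m := by
      have : ∑ i ∈ Finset.range m, x ^ (i + 1) = ∑ i ∈ Finset.Ico 1 (m + 1), x ^ i := by
        rw [Finset.sum_Ico_eq_sum_range]
        simp
        apply Finset.sum_congr rfl
        intro i _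
        ring_nf
      rw [this, geom_sum_Ico hx1 (by omega)]
      rw [hxdef]
      field_simp
      ring
    have hnx : (n : ℝ) * x ^ m + x ^ m ≤ 2 := by
      have hxe : (2:ℝ) ^ m * x ^ m = 1 := by
        rw [hxdef, inv_pow]; field_simp
      have hn2' : (n : ℝ) + 1 ≤ 2 * 2 ^ m := by
        have : (n : ℝ) + 1 ≤ ((2 ^ (m + 1) : ℕ) : ℝ) := by exact_mod_cast hn2
        rw [pow_succ] at this
        push_cast at this
        linarith
      have hxpos : (0:ℝ) < x ^ m := by positivity
      calc (n : ℝ) * x ^ m + x ^ m = ((n : ℝ) + 1) * x ^ m := by ring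
        _ ≤ 2 * 2 ^ m * x ^ m := mul_le_mul_of_nonneg_right hn2' hxpos.le
        _ = 2 := by rw [mul_assoc, hxe]; ring
    calc ∑ j ∈ N, w j
        = (n : ℝ) * x ^ m + ∑ i ∈ Finset.range m, ((T (i + 1)).card : ℝ) * x ^ (i + 1) := by
          simp only [hwdef]
          rw [Finset.sum_add_distrib, Finset.sum_const, hswap, nsmul_eq_mul, ← hndef]
      _ ≤ (n : ℝ) * x ^ m + ∑ i ∈ Finset.range m, (1 - x ^ (i + 1)) :=
          add_le_add_right (Finset.sum_le_sum hcardb) _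
      _ = (n : ℝ) * x ^ m + m - (1 - x ^ m) := by
          rw [Finset.sum_sub_distrib, Finset.sum_const, hgeo]
          simp [nsmul_eq_mul]
          ring
      _ ≤ (m : ℝ) + 1 := by linarith
  -- final contradiction
  have hNsum : ∑ j ∈ N, θ j ^ 2 = Q := by
    rw [hQdef, hNdef]
    exact Finset.sum_filter_of_ne (fun j _ h => fun h0 => h (by rw [h0]; ring))
  have hfinal : Q < Q := by
    have hNe : N.Nonempty := Finset.card_pos.mp (by omega)
    calc Q = ∑ j ∈ N, θ j ^ 2 := hNsum.symm
      _ < ∑ j ∈ N, Q / L * w j := Finset.sum_lt_sum_of_nonempty hNe claim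
      _ = Q / L * ∑ j ∈ N, w j := by rw [Finset.mul_sum]
      _ ≤ Q / L * ((m : ℝ) + 1) := mul_le_mul_of_nonneg_left hsumw (by positivity)
      _ ≤ Q / L * L := by
          apply mul_le_mul_of_nonneg_left _ (by positivity)
          -- (m : ℝ) + 1 ≤ L
          have h2mp : (2 : ℝ) ^ (m + 1) ≤ 2 * p := by
            have : 2 ^ (m + 1) ≤ 2 * p := by
              have : 2 ^ (m + 1) = 2 * 2 ^ m := by ring
              omega
            exact_mod_cast this
          have := Real.logb_le_logb_of_le (by norm_num : (1:ℝ) < 2) (by positivity) h2mp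
          rw [Real.logb_pow, Real.logb_self_eq_one (by norm_num)] at this
          rw [hLdef]; push_cast at this ⊢; linarith
      _ = Q := by field_simp
  exact lt_irrefl Q hfinal
end

section
/- Let p ≥ 2, let s ≥ 2 be an even natural number, let θ ∈ ℝ^p be nonzero, and let 0 < β ≤ ‖θ‖₂. Assume that the set {j ∈ {1,…,p} : |θ^j| ≥ ‖θ‖₂ / √(s·log₂(2p))} has cardinality at least s. Then there exists a sign ε ∈ {−1, +1} such that the set {j ∈ {1,…,p} : ε·θ^j ≥ β / √(s·log₂(2p)) and |θ^j| ≤ ‖θ‖₂/√2} has cardinality at least s/2. -/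
/-- Let `p ≥ 2`, let `s ≥ 2` be even, let `θ ∈ ℝ^p` be nonzero and let `0 < β ≤ ‖θ‖₂`.
If `#{j : |θ^j| ≥ ‖θ‖₂/√(s log₂(2p))} ≥ s`, then there is a sign `ε ∈ {−1, +1}` such that
`#{j : ε θ^j ≥ β/√(s log₂(2p)) and |θ^j| ≤ ‖θ‖₂/√2} ≥ s/2`. -/
theorem half_signal_coordinates_same_sign (p s : ℕ) (hp : 2 ≤ p) (hs : 2 ≤ s)
    (hseven : Even s) (θ : Fin p → ℝ) (hθ : θ ≠ 0)
    (β : ℝ) (hβ : 0 < β) (hβθ : β ≤ Real.sqrt (∑ k, θ k ^ 2))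
    (hcard : s ≤ (Finset.univ.filter (fun j : Fin p =>
        Real.sqrt (∑ k, θ k ^ 2) / Real.sqrt (s * Real.logb 2 (2 * p)) ≤ |θ j|)).card) :
    ∃ ε : ℝ, (ε = 1 ∨ ε = -1) ∧
      s / 2 ≤ (Finset.univ.filter (fun j : Fin p =>
        β / Real.sqrt (s * Real.logb 2 (2 * p)) ≤ ε * θ j ∧
          |θ j| ≤ Real.sqrt (∑ k, θ k ^ 2) / Real.sqrt 2)).card := by
  set N : ℝ := Real.sqrt (∑ k, θ k ^ 2) with hNdef
  set L : ℝ := Real.sqrt (s * Real.logb 2 (2 * p)) with hLdef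
  -- positivity facts
  have hsum_nonneg : (0:ℝ) ≤ ∑ k, θ k ^ 2 := Finset.sum_nonneg fun k _ => sq_nonneg _
  have hsum_pos : (0:ℝ) < ∑ k, θ k ^ 2 := by
    obtain ⟨k, hk⟩ := Function.ne_iff.mp hθ
    exact Finset.sum_pos' (fun i _ => sq_nonneg _)
      ⟨k, Finset.mem_univ k, pow_two_pos_of_ne_zero hk⟩
  have hN : 0 < N := Real.sqrt_pos.mpr hsum_pos
  have hL : 0 < L := by
    apply Real.sqrt_pos.mpr
    have h1 : (0:ℝ) < Real.logb 2 (2 * p) := by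
      apply Real.logb_pos (by norm_num)
      have : (2:ℝ) ≤ (p:ℝ) := by exact_mod_cast hp
      nlinarith
    have h2 : (0:ℝ) < (s:ℝ) := by exact_mod_cast Nat.lt_of_lt_of_le Nat.zero_lt_two hs
    exact mul_pos h2 h1
  have hβL : 0 < β / L := div_pos hβ hL
  have hβNL : β / L ≤ N / L := by gcongr
  -- the big set
  set T := Finset.univ.filter (fun j : Fin p => N / L ≤ |θ j|) with hT
  set D := Finset.univ.filter (fun j : Fin p => N / Real.sqrt 2 < |θ j|) with hD
  have hDcard : D.card ≤ 1 := by
    rw [Finset.card_le_one]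
    intro a ha b hb
    by_contra hab
    rw [hD, Finset.mem_filter] at ha hb
    have hNsq : N ^ 2 = ∑ k, θ k ^ 2 := Real.sq_sqrt hsum_nonneg
    have hhalf : (N / Real.sqrt 2) ^ 2 = N ^ 2 / 2 := by
      rw [div_pow, Real.sq_sqrt (by norm_num : (0:ℝ) ≤ 2)]
    have ha2 : N ^ 2 / 2 < θ a ^ 2 := by
      have := ha.2
      have hnn : (0:ℝ) ≤ N / Real.sqrt 2 := by positivity
      calc N ^ 2 / 2 = (N / Real.sqrt 2) ^ 2 := hhalf.symm
        _ < |θ a| ^ 2 := by nlinarith [ha.2]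
        _ = θ a ^ 2 := sq_abs _
    have hb2 : N ^ 2 / 2 < θ b ^ 2 := by
      have hnn : (0:ℝ) ≤ N / Real.sqrt 2 := by positivity
      calc N ^ 2 / 2 = (N / Real.sqrt 2) ^ 2 := hhalf.symm
        _ < |θ b| ^ 2 := by nlinarith [hb.2]
        _ = θ b ^ 2 := sq_abs _
    have hle : θ a ^ 2 + θ b ^ 2 ≤ ∑ k, θ k ^ 2 := by
      have : ({a, b} : Finset (Fin p)).sum (fun k => θ k ^ 2) ≤ ∑ k, θ k ^ 2 :=
        Finset.sum_le_sum_of_subset_of_nonneg (Finset.subset_univ _)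
          (fun i _ _ => sq_nonneg _)
      rwa [Finset.sum_pair hab] at this
    nlinarith
  set P := Finset.univ.filter (fun j : Fin p =>
      β / L ≤ (1:ℝ) * θ j ∧ |θ j| ≤ N / Real.sqrt 2) with hP
  set M := Finset.univ.filter (fun j : Fin p =>
      β / L ≤ (-1:ℝ) * θ j ∧ |θ j| ≤ N / Real.sqrt 2) with hM
  have hsub : T \ D ⊆ P ∪ M := by
    intro j hj
    rw [Finset.mem_sdiff, hT, hD, Finset.mem_filter, Finset.mem_filter] at hj
    have h1 : N / L ≤ |θ j| := hj.1.2
    have h2 : |θ j| ≤ N / Real.sqrt 2 := by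
      by_contra h
      exact hj.2 ⟨Finset.mem_univ j, lt_of_not_ge h⟩
    have h3 : β / L ≤ |θ j| := le_trans hβNL h1
    rw [Finset.mem_union, hP, hM, Finset.mem_filter, Finset.mem_filter]
    rcases le_or_gt 0 (θ j) with h4 | h4
    · left
      refine ⟨Finset.mem_univ j, ?_, h2⟩
      rw [one_mul]
      rwa [abs_of_nonneg h4] at h3
    · right
      refine ⟨Finset.mem_univ j, ?_, h2⟩
      rw [neg_one_mul]
      rwa [abs_of_neg h4] at h3
  have hdisj : Disjoint P M := by
    rw [Finset.disjoint_left]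
    intro j hjP hjM
    rw [hP, Finset.mem_filter] at hjP
    rw [hM, Finset.mem_filter] at hjM
    have := hjP.2.1
    have := hjM.2.1
    rw [one_mul] at *
    rw [neg_one_mul] at *
    linarith
  have hTD : s - 1 ≤ (T \ D).card := by
    have := Finset.le_card_sdiff D T
    have hTcard : s ≤ T.card := hcard
    omega
  have hPM : s - 1 ≤ P.card + M.card := by
    have h1 := Finset.card_le_card hsub
    have h2 : (P ∪ M).card = P.card + M.card := Finset.card_union_of_disjoint hdisj
    omega
  obtain ⟨r, hr⟩ := hseven
  have : s / 2 ≤ P.card ∨ s / 2 ≤ M.card := by omega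
  rcases this with h | h
  · exact ⟨1, Or.inl rfl, by simpa [hP] using h⟩
  · exact ⟨-1, Or.inr rfl, by simpa [hM] using h⟩
end

section
/- Let J be a nonempty finite set, let b ∈ ℝ with b ≠ 0, and for each j ∈ J let θ^j ∈ ℝ satisfy sgn(b)·θ^j ≥ |b|. Let (Y_i^j)_{i ∈ ℕ, j ∈ J} be a family of independent real random variables with Y_i^j ~ N(θ^j, 1). Then for every m ∈ ℕ, the probability that for every j ∈ J there exists h ∈ ℕ with h ≥ m/3 and Σ_{i=1}^h sgn(b)·(Y_i^j − b/2) ≤ 0 is at most exp( −|J|·b²·m/24 ). -/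
open MeasureTheory ProbabilityTheory
open Real
open scoped ENNReal NNReal

open Classical in
noncomputable def stcbExtend {ι : Type*} (S : Finset ι) (v : S → ℝ) : ι → ℝ :=
  fun q => if h : q ∈ S then v ⟨q, h⟩ else 0

lemma stcb_measurable_extend {ι : Type*} (S : Finset ι) :
    Measurable (stcbExtend S) := by
  apply measurable_pi_lambda
  intro q
  unfold stcbExtend
  by_cases h : q ∈ S
  · simp only [h, dif_pos]
    exact measurable_pi_apply _
  · simp only [h, dif_neg, not_false_iff]
    exact measurable_const

lemma stcb_extend_spec {ι : Type*} {Ω : Type*} [MeasurableSpace Ω]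
    (Y : ι → Ω → ℝ) (S : Finset ι) (ω : Ω) (q : ι) (hq : q ∈ S) :
    stcbExtend S (fun p : S => Y p ω) q = Y q ω := by
  simp [stcbExtend, hq]

lemma stcb_indepFun_comp {ι : Type*} {Ω : Type*} [MeasureSpace Ω]
    (Y : ι → Ω → ℝ) (hmeas : ∀ q, Measurable (Y q))
    (hindep : iIndepFun Y ℙ)
    (S T : Finset ι) (hST : Disjoint S T)
    (φ ψ : (ι → ℝ) → ℝ) (hφ : Measurable φ) (hψ : Measurable ψ)
    (hφS : ∀ u v, (∀ q ∈ S, u q = v q) → φ u = φ v)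
    (hψT : ∀ u v, (∀ q ∈ T, u q = v q) → ψ u = ψ v) :
    IndepFun (fun ω => φ (fun q => Y q ω)) (fun ω => ψ (fun q => Y q ω)) ℙ := by
  have base := hindep.indepFun_finset S T hST hmeas
  have h1 : (fun ω => φ (fun q => Y q ω))
      = (φ ∘ stcbExtend S) ∘ (fun ω (p : S) => Y p ω) := by
    funext ω
    exact (hφS _ _ (fun q hq => stcb_extend_spec Y S ω q hq)).symm
  have h2 : (fun ω => ψ (fun q => Y q ω))
      = (ψ ∘ stcbExtend T) ∘ (fun ω (p : T) => Y p ω) := by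
    funext ω
    exact (hψT _ _ (fun q hq => stcb_extend_spec Y T ω q hq)).symm
  rw [h1, h2]
  exact base.comp (hφ.comp (stcb_measurable_extend S)) (hψ.comp (stcb_measurable_extend T))

lemma stcb_indep_sets {ι : Type*} {Ω : Type*} [MeasureSpace Ω]
    (Y : ι → Ω → ℝ) (hmeas : ∀ q, Measurable (Y q))
    (hindep : iIndepFun Y ℙ)
    (S T : Finset ι) (hST : Disjoint S T)
    (C D : Set (ι → ℝ)) (hC : MeasurableSet C) (hD : MeasurableSet D)
    (hCS : ∀ u v, (∀ q ∈ S, u q = v q) → (u ∈ C ↔ v ∈ C))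
    (hDT : ∀ u v, (∀ q ∈ T, u q = v q) → (u ∈ D ↔ v ∈ D)) :
    ℙ ({ω | (fun q => Y q ω) ∈ C} ∩ {ω | (fun q => Y q ω) ∈ D})
      = ℙ {ω | (fun q => Y q ω) ∈ C} * ℙ {ω | (fun q => Y q ω) ∈ D} := by
  have base := hindep.indepFun_finset S T hST hmeas
  have h1 : {ω | (fun q => Y q ω) ∈ C}
      = (fun ω (p : S) => Y p ω) ⁻¹' (stcbExtend S ⁻¹' C) := by
    ext ω
    simp only [Set.mem_setOf_eq, Set.mem_preimage]
    exact hCS _ _ (fun q hq => (stcb_extend_spec Y S ω q hq).symm)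
  have h2 : {ω | (fun q => Y q ω) ∈ D}
      = (fun ω (p : T) => Y p ω) ⁻¹' (stcbExtend T ⁻¹' D) := by
    ext ω
    simp only [Set.mem_setOf_eq, Set.mem_preimage]
    exact hDT _ _ (fun q hq => (stcb_extend_spec Y T ω q hq).symm)
  rw [h1, h2]
  exact (indepFun_iff_measure_inter_preimage_eq_mul.mp base) _ _
    ((stcb_measurable_extend S) hC) ((stcb_measurable_extend T) hD)

lemma stcb_pdf_mul (μ t x : ℝ) :
    gaussianPDFReal μ 1 x * rexp (t * x)
      = rexp (t * μ + t ^ 2 / 2) * gaussianPDFReal (μ + t) 1 x := by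
  simp only [gaussianPDFReal, NNReal.coe_one, mul_one]
  rw [mul_assoc, ← Real.exp_add, mul_comm (rexp _) _, mul_assoc, ← Real.exp_add]
  congr 1
  ring

lemma stcb_integrable_exp_gaussian (μ t : ℝ) :
    Integrable (fun x => rexp (t * x)) (gaussianReal μ 1) := by
  rw [gaussianReal_of_var_ne_zero μ one_ne_zero]
  have hmeas : Measurable fun x => (gaussianPDFReal μ 1 x).toNNReal :=
    (measurable_gaussianPDFReal μ 1).real_toNNReal
  rw [show (gaussianPDF μ 1) = fun x => ((gaussianPDFReal μ 1 x).toNNReal : ℝ≥0∞) from rfl]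
  rw [integrable_withDensity_iff_integrable_smul hmeas]
  have : (fun x => ((gaussianPDFReal μ 1 x).toNNReal : ℝ≥0) • rexp (t * x))
      = fun x => rexp (t * μ + t ^ 2 / 2) * gaussianPDFReal (μ + t) 1 x := by
    funext x
    rw [NNReal.smul_def, smul_eq_mul, Real.coe_toNNReal _ (gaussianPDFReal_nonneg μ 1 x),
      stcb_pdf_mul μ t x]
  rw [this]
  exact (integrable_gaussianPDFReal (μ + t) 1).const_mul _

lemma stcb_integral_exp_gaussian (μ t : ℝ) :
    ∫ x, rexp (t * x) ∂(gaussianReal μ 1) = rexp (t * μ + t ^ 2 / 2) := by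
  rw [gaussianReal_of_var_ne_zero μ one_ne_zero]
  have hmeas : Measurable fun x => (gaussianPDFReal μ 1 x).toNNReal :=
    (measurable_gaussianPDFReal μ 1).real_toNNReal
  rw [show (gaussianPDF μ 1) = fun x => ((gaussianPDFReal μ 1 x).toNNReal : ℝ≥0∞) from rfl]
  rw [integral_withDensity_eq_integral_smul hmeas]
  have : (fun x => ((gaussianPDFReal μ 1 x).toNNReal : ℝ≥0) • rexp (t * x))
      = fun x => rexp (t * μ + t ^ 2 / 2) * gaussianPDFReal (μ + t) 1 x := by
    funext x
    rw [NNReal.smul_def, smul_eq_mul, Real.coe_toNNReal _ (gaussianPDFReal_nonneg μ 1 x),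
      stcb_pdf_mul μ t x]
  rw [this, integral_const_mul, integral_gaussianPDFReal_eq_one (μ + t) one_ne_zero, mul_one]

/-- The main per-index bound: probability that the random walk with positive drift dips
below 0 at some time in `[h₀, N]` is at most `exp(-b²/8)^h₀`. -/
lemma stcb_key {Ω J : Type*} [MeasureSpace Ω] [IsProbabilityMeasure (ℙ : Measure Ω)]
    (b : ℝ) (hb : b ≠ 0) (θ : J → ℝ)
    (Y : ℕ × J → Ω → ℝ) (hmeas : ∀ q, Measurable (Y q))
    (hindep : iIndepFun Y ℙ)
    (hdist : ∀ i j, Measure.map (Y (i, j)) ℙ = gaussianReal (θ j) 1)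
    (h₀ N : ℕ) (j : J) (hθj : |b| ≤ Real.sign b * θ j) :
    ℙ {ω | ∃ h, h ≤ N ∧ h₀ ≤ h ∧
        ∑ i ∈ Finset.range h, Real.sign b * (Y (i, j) ω - b / 2) ≤ 0}
      ≤ ENNReal.ofReal (rexp (-(b ^ 2 / 8)) ^ h₀) := by
  classical
  set σ : ℝ := Real.sign b with hσdef
  have hσb : σ * b = |b| := by
    rcases hb.lt_or_gt with h | h
    · rw [hσdef, Real.sign_of_neg h, abs_of_neg h]; ring
    · rw [hσdef, Real.sign_of_pos h, abs_of_pos h]; ring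
  have hσσ : σ * σ = 1 := by
    rcases hb.lt_or_gt with h | h
    · rw [hσdef, Real.sign_of_neg h]; ring
    · rw [hσdef, Real.sign_of_pos h]; ring
  have habs2 : |b| * |b| = b ^ 2 := by rw [← sq_abs]; ring
  set l : ℝ := |b| / 2 with hldef
  have hl0 : 0 ≤ l := by rw [hldef]; positivity
  set s : ℝ := -(l * σ) with hsdef
  -- the basic linear identity
  have hkey : ∀ y : ℝ, s * y + b ^ 2 / 4 = -(l * (σ * (y - b / 2))) := by
    intro y
    rw [hsdef, hldef]
    linear_combination (-(|b|) / 4) * hσb + (-(1 : ℝ) / 4) * habs2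
  set κ : ℝ := rexp (b ^ 2 / 4) * rexp (s * θ j + s ^ 2 / 2) with hκdef
  have hκ0 : 0 ≤ κ := by positivity
  have hκρ : κ ≤ rexp (-(b ^ 2 / 8)) := by
    rw [hκdef, ← Real.exp_add]
    apply Real.exp_le_exp.mpr
    have h1 : s * θ j ≤ -(l * |b|) := by
      have : l * |b| ≤ l * (σ * θ j) := mul_le_mul_of_nonneg_left hθj hl0
      rw [hsdef]
      nlinarith [this]
    have h2 : l * |b| = b ^ 2 / 2 := by rw [hldef]; linarith [habs2]
    have h3 : s ^ 2 = b ^ 2 / 4 := by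
      rw [hsdef, hldef]
      have : (-(|b| / 2 * σ)) ^ 2 = (|b| * |b|) * (σ * σ) / 4 := by ring
      rw [this, hσσ, habs2]; ring
    rw [h3]
    rw [h2] at h1
    linarith
  have hκ1 : κ ≤ 1 := hκρ.trans (Real.exp_le_one_iff.mpr (by nlinarith [sq_nonneg b]))
  -- abbreviations
  set Ssum : ℕ → Ω → ℝ := fun k ω => ∑ i ∈ Finset.range k, σ * (Y (i, j) ω - b / 2)
    with hSdef
  set W : ℕ → Ω → ℝ := fun i ω => rexp (s * Y (i, j) ω + b ^ 2 / 4) with hWdef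
  set M : ℕ → Ω → ℝ := fun n ω => ∏ i ∈ Finset.range n, W i ω with hMdef
  have hSmeas : ∀ k, Measurable (Ssum k) := by
    intro k
    apply Finset.measurable_sum
    intro i _
    exact ((hmeas (i, j)).sub measurable_const).const_mul σ
  have hWmeas : ∀ i, Measurable (W i) := by
    intro i
    exact (((hmeas (i, j)).const_mul s).add_const _).exp
  have hMmeas : ∀ n, Measurable (M n) := by
    intro n
    exact Finset.measurable_prod _ fun i _ => hWmeas i
  have hMexp : ∀ n ω, M n ω = rexp (-(l * Ssum n ω)) := by
    intro n ω
    rw [hMdef]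
    simp only
    rw [← Real.exp_sum]
    congr 1
    rw [hSdef]
    simp only
    rw [Finset.mul_sum, ← Finset.sum_neg_distrib]
    exact Finset.sum_congr rfl fun i _ => hkey (Y (i, j) ω)
  have hMpos : ∀ n ω, 0 < M n ω := by
    intro n ω; rw [hMexp]; exact Real.exp_pos _
  -- integrability and expectation of W
  have hWint : ∀ i, Integrable (W i) ℙ := by
    intro i
    have h1 : Integrable (fun x => rexp (s * x)) (Measure.map (Y (i, j)) ℙ) := by
      rw [hdist i j]; exact stcb_integrable_exp_gaussian _ s
    have h2 : Integrable (fun ω => rexp (s * Y (i, j) ω)) ℙ :=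
      (integrable_map_measure
        (by exact (((measurable_id.const_mul s)).exp).aestronglyMeasurable)
        (hmeas (i, j)).aemeasurable).mp h1
    have : W i = fun ω => rexp (b ^ 2 / 4) * rexp (s * Y (i, j) ω) := by
      funext ω; rw [hWdef]; simp only; rw [← Real.exp_add]; ring_nf
    rw [this]
    exact h2.const_mul _
  have hWval : ∀ i, ∫ ω, W i ω ∂ℙ = κ := by
    intro i
    have h2 : ∫ ω, rexp (s * Y (i, j) ω) ∂ℙ = rexp (s * θ j + s ^ 2 / 2) := by
      rw [← stcb_integral_exp_gaussian (θ j) s, ← hdist i j,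
        integral_map (hmeas (i, j)).aemeasurable
          (by exact (((measurable_id.const_mul s)).exp).aestronglyMeasurable)]
    have h3 : W i = fun ω => rexp (b ^ 2 / 4) * rexp (s * Y (i, j) ω) := by
      funext ω; rw [hWdef]; simp only; rw [← Real.exp_add]; ring_nf
    rw [h3, integral_const_mul, h2, hκdef]
  -- events
  set G : ℕ → Set Ω := fun n => {ω | ∀ k, h₀ ≤ k → k ≤ n → 0 < Ssum k ω} with hGdef
  set F : ℕ → Set Ω :=
    fun h => {ω | h₀ ≤ h ∧ Ssum h ω ≤ 0 ∧ ∀ k, h₀ ≤ k → k < h → 0 < Ssum k ω} with hFdef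
  have hGmeas : ∀ n, MeasurableSet (G n) := by
    intro n
    have : G n = ⋂ k, {ω | h₀ ≤ k → k ≤ n → 0 < Ssum k ω} := by
      ext ω; simp only [Set.mem_iInter, Set.mem_setOf_eq]; exact Iff.rfl
    rw [this]
    refine MeasurableSet.iInter fun k => ?_
    by_cases hk : h₀ ≤ k ∧ k ≤ n
    · have : {ω | h₀ ≤ k → k ≤ n → 0 < Ssum k ω} = {ω | 0 < Ssum k ω} := by
        ext ω; simp [hk.1, hk.2]
      rw [this]
      exact measurableSet_lt measurable_const (hSmeas k)
    · have : {ω | h₀ ≤ k → k ≤ n → 0 < Ssum k ω} = Set.univ := by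
        ext ω
        simp only [Set.mem_setOf_eq, Set.mem_univ, iff_true]
        intro h1 h2
        exact absurd ⟨h1, h2⟩ hk
      rw [this]
      exact MeasurableSet.univ
  have hFmeas : ∀ h, MeasurableSet (F h) := by
    intro h
    by_cases hh : h₀ ≤ h
    · have : F h = {ω | Ssum h ω ≤ 0} ∩ ⋂ k, {ω | h₀ ≤ k → k < h → 0 < Ssum k ω} := by
        ext ω; simp [hFdef, hh, Set.mem_iInter, and_assoc]
      rw [this]
      refine (measurableSet_le (hSmeas h) measurable_const).inter
        (MeasurableSet.iInter fun k => ?_)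
      by_cases hk : h₀ ≤ k ∧ k < h
      · have : {ω | h₀ ≤ k → k < h → 0 < Ssum k ω} = {ω | 0 < Ssum k ω} := by
          ext ω; simp [hk.1, hk.2]
        rw [this]
        exact measurableSet_lt measurable_const (hSmeas k)
      · have : {ω | h₀ ≤ k → k < h → 0 < Ssum k ω} = Set.univ := by
          ext ω
          simp only [Set.mem_setOf_eq, Set.mem_univ, iff_true]
          intro h1 h2
          exact absurd ⟨h1, h2⟩ hk
        rw [this]
        exact MeasurableSet.univ
    · have : F h = ∅ := by
        ext ω; simp [hFdef, hh]
      rw [this]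
      exact MeasurableSet.empty
  -- generic independence against W n
  have hindW : ∀ (n : ℕ) (φ : (ℕ × J → ℝ) → ℝ), Measurable φ →
      (∀ u v, (∀ q ∈ Finset.range n ×ˢ ({j} : Finset J), u q = v q) → φ u = φ v) →
      IndepFun (fun ω => φ (fun q => Y q ω)) (W n) ℙ := by
    intro n φ hφ hdep
    have hdisj : Disjoint (Finset.range n ×ˢ ({j} : Finset J)) ({(n, j)} : Finset (ℕ × J)) := by
      simp [Finset.disjoint_singleton_right, Finset.mem_product]
    exact stcb_indepFun_comp Y hmeas hindep _ _ hdisj φ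
      (fun u => rexp (s * u (n, j) + b ^ 2 / 4)) hφ
      (by fun_prop) hdep
      (fun u v huv => by
        show rexp (s * u (n, j) + b ^ 2 / 4) = rexp (s * v (n, j) + b ^ 2 / 4)
        rw [huv (n, j) (Finset.mem_singleton_self _)])
  set Φ : ℕ → (ℕ × J → ℝ) → ℝ :=
    fun n u => ∏ i ∈ Finset.range n, rexp (s * u (i, j) + b ^ 2 / 4) with hΦdef
  have hΦmeas : ∀ n, Measurable (Φ n) := by
    intro n
    exact Finset.measurable_prod _ fun i _ =>
      (by fun_prop)
  have hΦdep : ∀ n (u v : ℕ × J → ℝ),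
      (∀ q ∈ Finset.range n ×ˢ ({j} : Finset J), u q = v q) → Φ n u = Φ n v := by
    intro n u v huv
    refine Finset.prod_congr rfl fun i hi => ?_
    rw [huv (i, j) (Finset.mem_product.mpr ⟨hi, Finset.mem_singleton_self _⟩)]
  have hMW_indep : ∀ n, IndepFun (M n) (W n) ℙ := fun n => hindW n (Φ n) (hΦmeas n) (hΦdep n)
  have hMint : ∀ n, Integrable (M n) ℙ := by
    intro n
    induction n with
    | zero =>
      have : M 0 = fun _ => 1 := by funext ω; simp [hMdef]
      rw [this]; exact integrable_const 1
    | succ n ih =>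
      have : M (n + 1) = fun ω => M n ω * W n ω := by
        funext ω; rw [hMdef]; simp only; rw [Finset.prod_range_succ]
      rw [this]
      exact (hMW_indep n).integrable_mul ih (hWint n)
  have hMval : ∀ n, ∫ ω, M n ω ∂ℙ = κ ^ n := by
    intro n
    induction n with
    | zero =>
      have : M 0 = fun _ => 1 := by funext ω; simp [hMdef]
      rw [this]; simp
    | succ n ih =>
      have h1 : M (n + 1) = fun ω => M n ω * W n ω := by
        funext ω; rw [hMdef]; simp only; rw [Finset.prod_range_succ]
      rw [h1, pow_succ, ← ih, ← hWval n]
      exact (hMW_indep n).integral_fun_mul_eq_mul_integral (hMint n).aestronglyMeasurable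
        (hWint n).aestronglyMeasurable
  -- function-space version of G and the indicator independence
  set Gs : ℕ → Set (ℕ × J → ℝ) := fun n =>
    {u | ∀ k, h₀ ≤ k → k ≤ n → 0 < ∑ i ∈ Finset.range k, σ * (u (i, j) - b / 2)} with hGsdef
  have hGsmeas : ∀ n, MeasurableSet (Gs n) := by
    intro n
    have : Gs n = ⋂ k, {u : ℕ × J → ℝ | h₀ ≤ k → k ≤ n →
        0 < ∑ i ∈ Finset.range k, σ * (u (i, j) - b / 2)} := by
      ext u; simp only [Set.mem_iInter, Set.mem_setOf_eq]; exact Iff.rfl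
    rw [this]
    refine MeasurableSet.iInter fun k => ?_
    by_cases hk : h₀ ≤ k ∧ k ≤ n
    · have : {u : ℕ × J → ℝ | h₀ ≤ k → k ≤ n →
          0 < ∑ i ∈ Finset.range k, σ * (u (i, j) - b / 2)}
          = {u : ℕ × J → ℝ | 0 < ∑ i ∈ Finset.range k, σ * (u (i, j) - b / 2)} := by
        ext u; simp [hk.1, hk.2]
      rw [this]
      exact measurableSet_lt measurable_const
        (Finset.measurable_sum _ fun i _ =>
          (by fun_prop))
    · have : {u : ℕ × J → ℝ | h₀ ≤ k → k ≤ n →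
          0 < ∑ i ∈ Finset.range k, σ * (u (i, j) - b / 2)} = Set.univ := by
        ext u
        simp only [Set.mem_setOf_eq, Set.mem_univ, iff_true]
        intro h1 h2
        exact absurd ⟨h1, h2⟩ hk
      rw [this]
      exact MeasurableSet.univ
  have hGind : ∀ n, IndepFun ((G n).indicator (M n)) (W n) ℙ := by
    intro n
    have hid : (fun ω => ((Gs n).indicator (Φ n)) (fun q => Y q ω))
        = (G n).indicator (M n) := by
      funext ω
      by_cases hω : ω ∈ G n
      · rw [Set.indicator_of_mem hω, Set.indicator_of_mem (show (fun q => Y q ω) ∈ Gs n from hω)]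
      · rw [Set.indicator_of_notMem hω,
          Set.indicator_of_notMem (show (fun q => Y q ω) ∉ Gs n from hω)]
    rw [← hid]
    refine hindW n ((Gs n).indicator (Φ n)) ((hΦmeas n).indicator (hGsmeas n)) ?_
    intro u v huv
    by_cases hu : u ∈ Gs n
    · have hv : v ∈ Gs n := by
        intro k hk1 hk2
        have : (∑ i ∈ Finset.range k, σ * (v (i, j) - b / 2))
            = ∑ i ∈ Finset.range k, σ * (u (i, j) - b / 2) := by
          refine Finset.sum_congr rfl fun i hi => ?_
          rw [huv (i, j) (Finset.mem_product.mpr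
            ⟨Finset.mem_range.mpr (lt_of_lt_of_le (Finset.mem_range.mp hi) hk2),
              Finset.mem_singleton_self _⟩)]
        rw [this]
        exact hu k hk1 hk2
      rw [Set.indicator_of_mem hu, Set.indicator_of_mem hv]
      exact hΦdep n u v huv
    · have hv : v ∉ Gs n := by
        intro hv
        apply hu
        intro k hk1 hk2
        have : (∑ i ∈ Finset.range k, σ * (u (i, j) - b / 2))
            = ∑ i ∈ Finset.range k, σ * (v (i, j) - b / 2) := by
          refine Finset.sum_congr rfl fun i hi => ?_
          rw [huv (i, j) (Finset.mem_product.mpr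
            ⟨Finset.mem_range.mpr (lt_of_lt_of_le (Finset.mem_range.mp hi) hk2),
              Finset.mem_singleton_self _⟩)]
        rw [this]
        exact hv k hk1 hk2
      rw [Set.indicator_of_notMem hu, Set.indicator_of_notMem hv]
  have hGMint : ∀ n, Integrable ((G n).indicator (M n)) ℙ :=
    fun n => (hMint n).indicator (hGmeas n)
  have hFMint : ∀ h, Integrable ((F h).indicator (M h)) ℙ :=
    fun h => (hMint h).indicator (hFmeas h)
  have hFGbase : ∀ ω, (F h₀).indicator (M h₀) ω + (G h₀).indicator (M h₀) ω = M h₀ ω := by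
    intro ω
    rcases le_or_gt (Ssum h₀ ω) 0 with hS | hS
    · have hF : ω ∈ F h₀ :=
        ⟨le_rfl, hS, fun k hk1 hk2 => absurd (hk1.trans_lt hk2) (lt_irrefl h₀)⟩
      have hG : ω ∉ G h₀ := fun hG => absurd (hG h₀ le_rfl le_rfl) (not_lt.mpr hS)
      rw [Set.indicator_of_mem hF, Set.indicator_of_notMem hG, add_zero]
    · have hF : ω ∉ F h₀ := fun hF => absurd hF.2.1 (not_le.mpr hS)
      have hG : ω ∈ G h₀ := by
        intro k hk1 hk2
        have hk : k = h₀ := le_antisymm hk2 hk1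
        rw [hk]
        exact hS
      rw [Set.indicator_of_notMem hF, Set.indicator_of_mem hG, zero_add]
  have hstep : ∀ n, ∫ ω, (G n).indicator (M (n + 1)) ω ∂ℙ
      = (∫ ω, (G n).indicator (M n) ω ∂ℙ) * κ := by
    intro n
    have h1 : (G n).indicator (M (n + 1)) = fun ω => (G n).indicator (M n) ω * W n ω := by
      funext ω
      by_cases hω : ω ∈ G n
      · rw [Set.indicator_of_mem hω, Set.indicator_of_mem hω]
        rw [hMdef]
        simp only
        rw [Finset.prod_range_succ]
      · rw [Set.indicator_of_notMem hω, Set.indicator_of_notMem hω, zero_mul]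
    rw [h1, ← hWval n]
    exact (hGind n).integral_fun_mul_eq_mul_integral (hGMint n).aestronglyMeasurable
      (hWint n).aestronglyMeasurable
  have hsplit : ∀ n, h₀ ≤ n → ∀ ω,
      (F (n + 1)).indicator (M (n + 1)) ω + (G (n + 1)).indicator (M (n + 1)) ω
        = (G n).indicator (M (n + 1)) ω := by
    intro n hn ω
    by_cases hω : ω ∈ G n
    · rcases le_or_gt (Ssum (n + 1) ω) 0 with hS | hS
      · have hF : ω ∈ F (n + 1) :=
          ⟨hn.trans (Nat.le_succ n), hS, fun k hk1 hk2 => hω k hk1 (Nat.lt_succ_iff.mp hk2)⟩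
        have hG : ω ∉ G (n + 1) := fun hG =>
          absurd (hG (n + 1) (hn.trans (Nat.le_succ n)) le_rfl) (not_lt.mpr hS)
        rw [Set.indicator_of_mem hF, Set.indicator_of_notMem hG, Set.indicator_of_mem hω,
          add_zero]
      · have hF : ω ∉ F (n + 1) := fun hF => absurd hF.2.1 (not_le.mpr hS)
        have hG : ω ∈ G (n + 1) := by
          intro k hk1 hk2
          rcases Nat.lt_succ_iff_lt_or_eq.mp (Nat.lt_succ_of_le hk2) with hk | hk
          · exact hω k hk1 (Nat.lt_succ_iff.mp hk)
          · rw [hk]; exact hS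
        rw [Set.indicator_of_notMem hF, Set.indicator_of_mem hG, Set.indicator_of_mem hω,
          zero_add]
    · have hF : ω ∉ F (n + 1) := fun hF =>
        hω (fun k hk1 hk2 => hF.2.2 k hk1 (Nat.lt_succ_of_le hk2))
      have hG : ω ∉ G (n + 1) := fun hG =>
        hω (fun k hk1 hk2 => hG k hk1 (hk2.trans (Nat.le_succ n)))
      rw [Set.indicator_of_notMem hF, Set.indicator_of_notMem hG,
        Set.indicator_of_notMem hω, add_zero]
  have hVille : ∀ n, (∑ h ∈ Finset.Icc h₀ (h₀ + n), ∫ ω, (F h).indicator (M h) ω ∂ℙ)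
      + ∫ ω, (G (h₀ + n)).indicator (M (h₀ + n)) ω ∂ℙ ≤ κ ^ h₀ := by
    intro n
    induction n with
    | zero =>
      rw [Nat.add_zero, Finset.Icc_self, Finset.sum_singleton]
      have e1 : (∫ ω, (F h₀).indicator (M h₀) ω ∂ℙ) + ∫ ω, (G h₀).indicator (M h₀) ω ∂ℙ
          = ∫ ω, M h₀ ω ∂ℙ := by
        rw [← integral_add (hFMint h₀) (hGMint h₀)]
        exact integral_congr_ae (Filter.Eventually.of_forall fun ω => hFGbase ω)
      rw [e1, hMval h₀]
    | succ n ih =>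
      rw [show h₀ + (n + 1) = h₀ + n + 1 from rfl]
      have hIcc : Finset.Icc h₀ (h₀ + n + 1) = insert (h₀ + n + 1) (Finset.Icc h₀ (h₀ + n)) :=
        (Finset.insert_Icc_right_eq_Icc_add_one ((Nat.le_add_right h₀ n).trans (Nat.le_succ _))).symm
      rw [hIcc, Finset.sum_insert (by simp [Finset.mem_Icc])]
      have hAC : (∫ ω, (F (h₀ + n + 1)).indicator (M (h₀ + n + 1)) ω ∂ℙ)
          + ∫ ω, (G (h₀ + n + 1)).indicator (M (h₀ + n + 1)) ω ∂ℙ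
          = ∫ ω, (G (h₀ + n)).indicator (M (h₀ + n + 1)) ω ∂ℙ := by
        rw [← integral_add (hFMint _) (hGMint _)]
        exact integral_congr_ae
          (Filter.Eventually.of_forall (hsplit (h₀ + n) (Nat.le_add_right h₀ n)))
      have hnn : 0 ≤ ∫ ω, (G (h₀ + n)).indicator (M (h₀ + n)) ω ∂ℙ :=
        integral_nonneg fun ω => Set.indicator_nonneg (fun ω' _ => (hMpos _ ω').le) ω
      have hle : ∫ ω, (G (h₀ + n)).indicator (M (h₀ + n + 1)) ω ∂ℙ
          ≤ ∫ ω, (G (h₀ + n)).indicator (M (h₀ + n)) ω ∂ℙ := by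
        rw [hstep (h₀ + n)]
        nlinarith [hnn, hκ1, hκ0]
      linarith [ih, hAC, hle]
  have hFP : ∀ h, (ℙ (F h)).toReal ≤ ∫ ω, (F h).indicator (M h) ω ∂ℙ := by
    intro h
    rw [← measureReal_def, ← integral_indicator_one (hFmeas h)]
    refine integral_mono ((integrable_const (1 : ℝ)).indicator (hFmeas h)) (hFMint h) ?_
    intro ω
    by_cases hω : ω ∈ F h
    · rw [Set.indicator_of_mem hω, Set.indicator_of_mem hω]
      show (1 : ℝ) ≤ M h ω
      rw [hMexp]
      refine Real.one_le_exp ?_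
      nlinarith [hl0, hω.2.1]
    · rw [Set.indicator_of_notMem hω, Set.indicator_of_notMem hω]
  have hsumR : ∀ n, (∑ h ∈ Finset.Icc h₀ (h₀ + n), (ℙ (F h)).toReal) ≤ κ ^ h₀ := by
    intro n
    have h1 : (∑ h ∈ Finset.Icc h₀ (h₀ + n), (ℙ (F h)).toReal)
        ≤ ∑ h ∈ Finset.Icc h₀ (h₀ + n), ∫ ω, (F h).indicator (M h) ω ∂ℙ :=
      Finset.sum_le_sum fun h _ => hFP h
    have hnn : 0 ≤ ∫ ω, (G (h₀ + n)).indicator (M (h₀ + n)) ω ∂ℙ :=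
      integral_nonneg fun ω => Set.indicator_nonneg (fun ω' _ => (hMpos _ ω').le) ω
    linarith [hVille n]
  have hsumE : ∀ n, (∑ h ∈ Finset.Icc h₀ (h₀ + n), ℙ (F h)) ≤ ENNReal.ofReal (κ ^ h₀) := by
    intro n
    have h1 : (∑ h ∈ Finset.Icc h₀ (h₀ + n), ℙ (F h))
        = ENNReal.ofReal (∑ h ∈ Finset.Icc h₀ (h₀ + n), (ℙ (F h)).toReal) := by
      rw [ENNReal.ofReal_sum_of_nonneg (fun h _ => ENNReal.toReal_nonneg)]
      exact Finset.sum_congr rfl fun h _ => (ENNReal.ofReal_toReal (measure_ne_top ℙ _)).symm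
    rw [h1]
    exact ENNReal.ofReal_le_ofReal (hsumR n)
  have hsub : {ω | ∃ h, h ≤ N ∧ h₀ ≤ h ∧ Ssum h ω ≤ 0} ⊆ ⋃ h ∈ Finset.Icc h₀ N, F h := by
    rintro ω ⟨h, hN, hh0, hS⟩
    have hQ : ∃ k, h₀ ≤ k ∧ k ≤ N ∧ Ssum k ω ≤ 0 := ⟨h, hh0, hN, hS⟩
    obtain ⟨hk1, hk2, hk3⟩ := Nat.find_spec hQ
    refine Set.mem_biUnion (Finset.mem_Icc.mpr ⟨hk1, hk2⟩) ?_
    refine ⟨hk1, hk3, fun k' h1 h2 => ?_⟩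
    by_contra h3
    push_neg at h3
    exact Nat.find_min hQ h2 ⟨h1, (le_of_lt h2).trans hk2, h3⟩
  calc ℙ {ω | ∃ h, h ≤ N ∧ h₀ ≤ h ∧ Ssum h ω ≤ 0}
      ≤ ℙ (⋃ h ∈ Finset.Icc h₀ N, F h) := measure_mono hsub
    _ ≤ ∑ h ∈ Finset.Icc h₀ N, ℙ (F h) := measure_biUnion_finset_le _ _
    _ ≤ ∑ h ∈ Finset.Icc h₀ (h₀ + N), ℙ (F h) :=
        Finset.sum_le_sum_of_subset (Finset.Icc_subset_Icc_right (Nat.le_add_left N h₀))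
    _ ≤ ENNReal.ofReal (κ ^ h₀) := hsumE N
    _ ≤ ENNReal.ofReal (rexp (-(b ^ 2 / 8)) ^ h₀) :=
        ENNReal.ofReal_le_ofReal (pow_le_pow_left₀ hκ0 hκρ h₀)

/-- Let `J` be a nonempty finite index set, `b ≠ 0` real, and `θ^j` reals with
`sgn(b) θ^j ≥ |b|` for all `j ∈ J`.  Let `(Y (i, j))` (with `Y (i, j)` standing for
`Y_{i+1}^j`) be a family of independent random variables with `Y (i, j) ~ N(θ^j, 1)`.
Then for every `m ∈ ℕ`, the probability that for every `j ∈ J` there exists `h ∈ ℕ` with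
`h ≥ m/3` and `∑_{i=1}^h sgn(b)(Y_i^j - b/2) ≤ 0` is at most `exp(-|J| b² m / 24)`. -/
theorem simultaneous_tail_collapse_bound
    {Ω J : Type*} [MeasureSpace Ω] [IsProbabilityMeasure (ℙ : Measure Ω)]
    [Fintype J] [Nonempty J]
    (b : ℝ) (hb : b ≠ 0) (θ : J → ℝ) (hθ : ∀ j, |b| ≤ Real.sign b * θ j)
    (Y : ℕ × J → Ω → ℝ) (hmeas : ∀ q, Measurable (Y q))
    (hindep : iIndepFun Y ℙ)
    (hdist : ∀ i j, Measure.map (Y (i, j)) ℙ = gaussianReal (θ j) 1)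
    (m : ℕ) :
    ℙ {ω | ∀ j : J, ∃ h : ℕ, (m : ℝ) / 3 ≤ (h : ℝ) ∧
          ∑ i ∈ Finset.range h, Real.sign b * (Y (i, j) ω - b / 2) ≤ 0}
      ≤ ENNReal.ofReal (Real.exp (-(Fintype.card J : ℝ) * b ^ 2 * m / 24)) := by
  classical
  set σ : ℝ := Real.sign b with hσdef
  set h₀ : ℕ := ⌈(m : ℝ) / 3⌉₊ with hh₀
  set A : ℕ → J → Set Ω := fun N j =>
    {ω | ∃ h, h ≤ N ∧ h₀ ≤ h ∧ ∑ i ∈ Finset.range h, σ * (Y (i, j) ω - b / 2) ≤ 0} with hAdef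
  set B : ℕ → Set Ω := fun N => {ω | ∀ j ∈ (Finset.univ : Finset J), ∃ h, h ≤ N ∧ h₀ ≤ h ∧
    ∑ i ∈ Finset.range h, σ * (Y (i, j) ω - b / 2) ≤ 0} with hBdef
  have hmapsto : {ω | ∀ j : J, ∃ h : ℕ, (m : ℝ) / 3 ≤ (h : ℝ) ∧
      ∑ i ∈ Finset.range h, σ * (Y (i, j) ω - b / 2) ≤ 0} = ⋃ N, B N := by
    ext ω
    simp only [Set.mem_setOf_eq, Set.mem_iUnion]
    constructor
    · intro hω
      choose f hf1 hf2 using hω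
      refine ⟨Finset.univ.sup f, ?_⟩
      intro j _
      exact ⟨f j, Finset.le_sup (Finset.mem_univ j), Nat.ceil_le.mpr (hf1 j), hf2 j⟩
    · rintro ⟨N, hω⟩ j
      obtain ⟨h, _, hh0, hS⟩ := hω j (Finset.mem_univ j)
      exact ⟨h, (Nat.le_ceil _).trans (Nat.cast_le.mpr hh0), hS⟩
  have hmono : Monotone B := by
    intro N N' hNN' ω hω j hj
    obtain ⟨h, h1, h2, h3⟩ := hω j hj
    exact ⟨h, h1.trans hNN', h2, h3⟩
  have hprod : ∀ (N : ℕ) (t : Finset J), ℙ {ω | ∀ j ∈ t, ∃ h, h ≤ N ∧ h₀ ≤ h ∧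
      ∑ i ∈ Finset.range h, σ * (Y (i, j) ω - b / 2) ≤ 0} = ∏ j ∈ t, ℙ (A N j) := by
    intro N t
    set C : J → Set (ℕ × J → ℝ) := fun j => {u | ∃ h, h ≤ N ∧ h₀ ≤ h ∧
      ∑ i ∈ Finset.range h, σ * (u (i, j) - b / 2) ≤ 0} with hCdef
    have hCmeas : ∀ j, MeasurableSet (C j) := by
      intro j
      have e : C j = ⋃ h, {u : ℕ × J → ℝ | h ≤ N ∧ h₀ ≤ h ∧
          ∑ i ∈ Finset.range h, σ * (u (i, j) - b / 2) ≤ 0} := by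
        ext u
        simp only [Set.mem_iUnion, Set.mem_setOf_eq]
        exact Iff.rfl
      rw [e]
      refine MeasurableSet.iUnion fun h => ?_
      by_cases hh : h ≤ N ∧ h₀ ≤ h
      · have e2 : {u : ℕ × J → ℝ | h ≤ N ∧ h₀ ≤ h ∧
            ∑ i ∈ Finset.range h, σ * (u (i, j) - b / 2) ≤ 0}
            = {u : ℕ × J → ℝ | ∑ i ∈ Finset.range h, σ * (u (i, j) - b / 2) ≤ 0} := by
          ext u; simp [hh.1, hh.2]
        rw [e2]
        exact measurableSet_le (Finset.measurable_sum _ fun i _ =>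
          (by fun_prop))
          measurable_const
      · have e2 : {u : ℕ × J → ℝ | h ≤ N ∧ h₀ ≤ h ∧
            ∑ i ∈ Finset.range h, σ * (u (i, j) - b / 2) ≤ 0} = ∅ := by
          ext u
          simp only [Set.mem_setOf_eq, Set.mem_empty_iff_false, iff_false]
          intro hcon
          exact hh ⟨hcon.1, hcon.2.1⟩
        rw [e2]
        exact MeasurableSet.empty
    have hCdep : ∀ (j : J) (u v : ℕ × J → ℝ),
        (∀ q ∈ Finset.range (N + 1) ×ˢ ({j} : Finset J), u q = v q) →
        (u ∈ C j ↔ v ∈ C j) := by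
      intro j u v huv
      have hsum : ∀ h, h ≤ N → (∑ i ∈ Finset.range h, σ * (u (i, j) - b / 2))
          = ∑ i ∈ Finset.range h, σ * (v (i, j) - b / 2) := by
        intro h hh
        refine Finset.sum_congr rfl fun i hi => ?_
        rw [huv (i, j) (Finset.mem_product.mpr ⟨Finset.mem_range.mpr
          ((Finset.mem_range.mp hi).trans_le (hh.trans (Nat.le_succ N))),
          Finset.mem_singleton_self _⟩)]
      constructor
      · rintro ⟨h, hh1, hh2, hh3⟩
        exact ⟨h, hh1, hh2, hsum h hh1 ▸ hh3⟩
      · rintro ⟨h, hh1, hh2, hh3⟩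
        exact ⟨h, hh1, hh2, (hsum h hh1).symm ▸ hh3⟩
    set Dm : Finset J → Set (ℕ × J → ℝ) := fun t => {u | ∀ j' ∈ t, u ∈ C j'} with hDdef
    have hDmeas : ∀ t : Finset J, MeasurableSet (Dm t) := by
      intro t
      have e : Dm t = ⋂ j' ∈ t, C j' := by
        ext u
        simp only [Set.mem_iInter]
        exact Iff.rfl
      rw [e]
      exact MeasurableSet.biInter t.countable_toSet fun j' _ => hCmeas j'
    have hDdep : ∀ t : Finset J, ∀ u v : ℕ × J → ℝ,
        (∀ q ∈ Finset.range (N + 1) ×ˢ t, u q = v q) → (u ∈ Dm t ↔ v ∈ Dm t) := by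
      intro t u v huv
      have hres : ∀ j' ∈ t, ∀ q ∈ Finset.range (N + 1) ×ˢ ({j'} : Finset J), u q = v q := by
        intro j' hj' q hq
        refine huv q (Finset.mem_product.mpr ⟨(Finset.mem_product.mp hq).1, ?_⟩)
        rw [Finset.mem_singleton.mp (Finset.mem_product.mp hq).2]
        exact hj'
      exact ⟨fun hu j' hj' => (hCdep j' u v (hres j' hj')).mp (hu j' hj'),
        fun hv j' hj' => (hCdep j' u v (hres j' hj')).mpr (hv j' hj')⟩
    induction t using Finset.induction_on with
    | empty => simp
    | @insert j t hj ih =>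
      have hdisj : Disjoint (Finset.range (N + 1) ×ˢ ({j} : Finset J))
          (Finset.range (N + 1) ×ˢ t) := by
        rw [Finset.disjoint_left]
        rintro ⟨i, j'⟩ hq1 hq2
        have h1 := (Finset.mem_product.mp hq1).2
        have h2 := (Finset.mem_product.mp hq2).2
        rw [Finset.mem_singleton] at h1
        exact hj (h1 ▸ h2)
      have hsplit2 : {ω | ∀ j' ∈ insert j t, ∃ h, h ≤ N ∧ h₀ ≤ h ∧
          ∑ i ∈ Finset.range h, σ * (Y (i, j') ω - b / 2) ≤ 0}
          = {ω | (fun q => Y q ω) ∈ C j} ∩ {ω | (fun q => Y q ω) ∈ Dm t} := by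
        ext ω
        simp only [Set.mem_inter_iff, Set.mem_setOf_eq]
        constructor
        · intro hω
          exact ⟨hω j (Finset.mem_insert_self _ _),
            fun j' hj' => hω j' (Finset.mem_insert_of_mem hj')⟩
        · rintro ⟨h1, h2⟩ j' hj'
          rcases Finset.mem_insert.mp hj' with h | h
          · subst h; exact h1
          · exact h2 j' h
      rw [hsplit2, stcb_indep_sets Y hmeas hindep _ _ hdisj (C j) (Dm t) (hCmeas j)
        (hDmeas t) (hCdep j) (hDdep t), Finset.prod_insert hj]
      have e1 : ℙ {ω | (fun q => Y q ω) ∈ C j} = ℙ (A N j) := rfl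
      have e2 : ℙ {ω | (fun q => Y q ω) ∈ Dm t} = ∏ j' ∈ t, ℙ (A N j') := ih
      rw [e1, e2]
  have hkey : ∀ (N : ℕ) (j : J), ℙ (A N j) ≤ ENNReal.ofReal (rexp (-(b ^ 2 / 8)) ^ h₀) :=
    fun N j => stcb_key b hb θ Y hmeas hindep hdist h₀ N j (hθ j)
  rw [hmapsto, hmono.measure_iUnion]
  refine iSup_le fun N => ?_
  calc ℙ (B N) = ∏ j ∈ Finset.univ, ℙ (A N j) := hprod N Finset.univ
    _ ≤ ∏ _j ∈ (Finset.univ : Finset J), ENNReal.ofReal (rexp (-(b ^ 2 / 8)) ^ h₀) :=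
        Finset.prod_le_prod' fun j _ => hkey N j
    _ = ENNReal.ofReal (rexp (-(b ^ 2 / 8)) ^ h₀) ^ (Fintype.card J) := by
        rw [Finset.prod_const, Finset.card_univ]
    _ ≤ ENNReal.ofReal (Real.exp (-(Fintype.card J : ℝ) * b ^ 2 * m / 24)) := by
        rw [← ENNReal.ofReal_pow (by positivity)]
        apply ENNReal.ofReal_le_ofReal
        rw [← Real.exp_nat_mul, ← Real.exp_nat_mul]
        apply Real.exp_le_exp.mpr
        have hc0 : (0 : ℝ) ≤ (Fintype.card J : ℝ) := Nat.cast_nonneg _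
        have hh : (m : ℝ) / 3 ≤ (h₀ : ℝ) := Nat.le_ceil _
        nlinarith [mul_nonneg (mul_nonneg hc0 (sub_nonneg.mpr hh)) (sq_nonneg b)]
end
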